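/- arXiv:math/0412408 — 3 statements merged into one kernel-verified Lean document; each statement's English description precedes it below -/
import Mathlib

section
/- A vector ξ : S → ℝ ∪ {−∞} is a normalised extremal generator of ℋ if and only if ξ ∈ ℳᵐ. -/
open Filter Topology

noncomputable section

namespace MaxPlus

variable {S : Type*}

/-- Weight of the path `p 0, p 1, ..., p n` for the kernel `A`. -/
def pathWeight (A : S → S → EReal) (p : ℕ → S) (n : ℕ) : EReal :=
  ∑ k ∈ Finset.range n, A (p k) (p (k + 1))

/-- The max-plus star kernel `A*`: supremum of weights of paths of length `≥ 0`. -/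
def star (A : S → S → EReal) (i j : S) : EReal :=
  ⨆ (n : ℕ) (p : ℕ → S) (_ : p 0 = i ∧ p n = j), pathWeight A p n

/-- The max-plus kernel `A⁺`: supremum of weights of paths of length `≥ 1`. -/
def plus (A : S → S → EReal) (i j : S) : EReal :=
  ⨆ (n : ℕ) (_ : 1 ≤ n) (p : ℕ → S) (_ : p 0 = i ∧ p n = j), pathWeight A p n

/-- `π` is a left super-harmonic row vector (with full support, being real valued). -/
def LeftSuperharmonic (A : S → S → EReal) (π : S → ℝ) : Prop :=
  ∀ j, (⨆ i, ((π i : EReal) + A i j)) ≤ (π j : EReal)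

/-- The Martin kernel `K_{ij} = A*_{ij} - π_j`. -/
def K (A : S → S → EReal) (π : S → ℝ) (i j : S) : EReal :=
  star A i j - (π j : EReal)

/-- `K♭_{ij} = A⁺_{ij} - π_j`. -/
def Kflat (A : S → S → EReal) (π : S → ℝ) (i j : S) : EReal :=
  plus A i j - (π j : EReal)

/-- The set `𝒦` of columns of the Martin kernel. -/
def kerCols (A : S → S → EReal) (π : S → ℝ) : Set (S → EReal) :=
  Set.range fun j => fun i => K A π i j

/-- The Martin space `ℳ`: closure of `𝒦` in the product topology. -/
def martin (A : S → S → EReal) (π : S → ℝ) : Set (S → EReal) :=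
  closure (kerCols A π)

/-- `μ_u(w)`: the limsup of `π_j + u_j` as `K_{·j} → w`. -/
def mu (A : S → S → EReal) (π : S → ℝ) (u : S → EReal) (w : S → EReal) : EReal :=
  ⨅ (W : Set (S → EReal)) (_ : W ∈ 𝓝 w),
    ⨆ (j : S) (_ : (fun i => K A π i j) ∈ W), ((π j : EReal) + u j)

/-- `w♭_i`: the liminf of `K♭_{ij}` as `K_{·j} → w`. -/
def flat (A : S → S → EReal) (π : S → ℝ) (w : S → EReal) (i : S) : EReal :=
  ⨆ (W : Set (S → EReal)) (_ : W ∈ 𝓝 w),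
    ⨅ (j : S) (_ : (fun i' => K A π i' j) ∈ W), Kflat A π i j

/-- The kernel `H(z,w) = μ_w(z)`. -/
def H (A : S → S → EReal) (π : S → ℝ) (z w : S → EReal) : EReal := mu A π w z

/-- The kernel `H♭(z,w) = μ_{w♭}(z)`. -/
def Hflat (A : S → S → EReal) (π : S → ℝ) (z w : S → EReal) : EReal :=
  mu A π (flat A π w) z

/-- The minimal Martin space `ℳᵐ = {w ∈ ℳ : H♭(w,w) = 0}`. -/
def martinMin (A : S → S → EReal) (π : S → ℝ) : Set (S → EReal) :=
  {w | w ∈ martin A π ∧ Hflat A π w w = 0}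

/-- The maximal circuit mean `ρ(A)`. -/
def maxCircuitMean (A : S → S → EReal) : EReal :=
  ⨆ (k : ℕ) (_ : 1 ≤ k) (p : ℕ → S) (_ : p k = p 0),
    (((k : ℝ)⁻¹ : ℝ) : EReal) * pathWeight A p k

/-- `α`-almost-geodesic with respect to the left super-harmonic vector `π`. -/
def IsAlmostGeodesic (A : S → S → EReal) (π : S → ℝ) (x : ℕ → S) : Prop :=
  ∃ α : ℝ, 0 ≤ α ∧ ∀ k : ℕ,
    (π (x k) : EReal) ≤ (α : EReal) + (π (x 0) : EReal) + pathWeight A x k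

/-- The set `𝒮` of `π`-integrable super-harmonic vectors. -/
def Sset (A : S → S → EReal) (π : S → ℝ) : Set (S → EReal) :=
  {u | (∀ i, u i ≠ ⊤) ∧ (∀ i, (⨆ j, A i j + u j) ≤ u i) ∧
    (⨆ j, ((π j : EReal) + u j)) < ⊤}

/-- The set `ℋ` of `π`-integrable harmonic vectors. -/
def Hset (A : S → S → EReal) (π : S → ℝ) : Set (S → EReal) :=
  {u | (∀ i, u i ≠ ⊤) ∧ (∀ i, (⨆ j, A i j + u j) = u i) ∧
    (⨆ j, ((π j : EReal) + u j)) < ⊤}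

/-- A vector is normalised if `sup_j (π_j + u_j) = 0`. -/
def Normalised (π : S → ℝ) (u : S → EReal) : Prop :=
  (⨆ j, ((π j : EReal) + u j)) = 0

/-- `ξ` is an extremal generator of `V`. -/
def ExtremalGen (V : Set (S → EReal)) (ξ : S → EReal) : Prop :=
  ξ ∈ V ∧ ξ ≠ (fun _ => (⊥ : EReal)) ∧
    ∀ u v, u ∈ V → v ∈ V → ξ = (fun i => u i ⊔ v i) → ξ = u ∨ ξ = v

end MaxPlus
namespace MaxPlus

open Filter Topology

variable {S : Type*}

/-! ### EReal helper lemmas -/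

lemma ereal_iSup_add_le {ι : Sort*} (f : ι → EReal) (c u : EReal)
    (h : ∀ i, f i + c ≤ u) : (⨆ i, f i) + c ≤ u := by
  refine EReal.add_le_of_forall_lt (fun a' ha' b' hb' => ?_)
  rcases lt_iSup_iff.1 ha' with ⟨i, hi⟩
  exact le_trans (add_le_add hi.le hb'.le) (h i)

lemma ereal_add_iSup_le {ι : Sort*} (f : ι → EReal) (c u : EReal)
    (h : ∀ i, c + f i ≤ u) : c + (⨆ i, f i) ≤ u := by
  rw [add_comm]
  exact ereal_iSup_add_le f c u fun i => by rw [add_comm]; exact h i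

/-- To prove `a + y ≤ x`, it suffices to consider real numbers below `y`. -/
lemma ereal_add_le_of_forall_real (a y x : EReal)
    (h : ∀ c : ℝ, (c : EReal) < y → a + (c : EReal) ≤ x) : a + y ≤ x := by
  refine EReal.add_le_of_forall_lt (fun a' ha' b' hb' => ?_)
  rcases exists_between hb' with ⟨z, hz1, hz2⟩
  have hzb : z ≠ ⊥ := fun hzb => by rw [hzb] at hz1; exact (not_lt_bot hz1).elim
  have hzt : z ≠ ⊤ := fun hzt => by rw [hzt] at hz2; exact (not_top_lt hz2).elim
  lift z to ℝ using ⟨hzt, hzb⟩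
  exact le_trans (add_le_add ha'.le hz1.le) (h z hz2)

/-- To prove `x ≤ y`, it suffices `x ≤ c` for all reals `c > y`. -/
lemma ereal_le_of_forall_real_gt (x y : EReal)
    (h : ∀ c : ℝ, y < (c : EReal) → x ≤ (c : EReal)) : x ≤ y := by
  by_contra hx
  push_neg at hx
  rcases exists_between hx with ⟨z, hz1, hz2⟩
  have hzb : z ≠ ⊥ := fun hzb => by rw [hzb] at hz1; exact (not_lt_bot hz1).elim
  have hzt : z ≠ ⊤ := fun hzt => by rw [hzt] at hz2; exact (not_top_lt hz2).elim
  lift z to ℝ using ⟨hzt, hzb⟩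
  exact absurd (h z hz1) (not_le.2 hz2)

/-- To prove `y ≤ x`, it suffices `c ≤ x` for all reals `c < y`. -/
lemma ereal_le_of_forall_real_lt (x y : EReal)
    (h : ∀ c : ℝ, (c : EReal) < y → (c : EReal) ≤ x) : y ≤ x := by
  by_contra hx
  push_neg at hx
  rcases exists_between hx with ⟨z, hz1, hz2⟩
  have hzb : z ≠ ⊥ := fun hzb => by rw [hzb] at hz1; exact (not_lt_bot hz1).elim
  have hzt : z ≠ ⊤ := fun hzt => by rw [hzt] at hz2; exact (not_top_lt hz2).elim
  lift z to ℝ using ⟨hzt, hzb⟩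
  exact absurd (h z hz2) (not_le.2 hz1)

lemma ereal_add_iSup {ι : Sort*} (f : ι → EReal) (a : EReal) :
    a + (⨆ i, f i) = ⨆ i, a + f i := by
  refine le_antisymm ?_ (iSup_le fun i => add_le_add_right (le_iSup f i) a)
  exact ereal_add_iSup_le f a _ (fun i => le_iSup (fun i => a + f i) i)

lemma ereal_sub_add_cancel (x : EReal) (r : ℝ) : (x - (r : EReal)) + (r : EReal) = x := by
  rw [sub_eq_add_neg, ← EReal.coe_neg, add_assoc, ← EReal.coe_add]
  norm_num

lemma ereal_add_sub_assoc (a x : EReal) (r : ℝ) : a + (x - (r : EReal)) = (a + x) - (r : EReal) := by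
  rw [sub_eq_add_neg, sub_eq_add_neg, ← add_assoc]

lemma ereal_sub_le_iff {x y : EReal} {r : ℝ} : x - (r : EReal) ≤ y ↔ x ≤ y + (r : EReal) := by
  refine EReal.sub_le_iff_le_add (Or.inl ?_) (Or.inl ?_) <;> simp

lemma ereal_le_sub_iff {x y : EReal} {r : ℝ} : x ≤ y - (r : EReal) ↔ x + (r : EReal) ≤ y := by
  refine EReal.le_sub_iff_add_le (Or.inl ?_) (Or.inl ?_) <;> simp

lemma ereal_add_sup (a b c : EReal) : a + (b ⊔ c) = (a + b) ⊔ (a + c) := by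
  rcases le_total b c with h | h
  · rw [sup_eq_right.2 h, sup_eq_right.2 (add_le_add_right h a)]
  · rw [sup_eq_left.2 h, sup_eq_left.2 (add_le_add_right h a)]

end MaxPlus
namespace MaxPlus
open Filter Topology
variable {S : Type*}

/-! ### Path lemmas -/

lemma pathWeight_le_star (A : S → S → EReal) (p : ℕ → S) (n : ℕ) :
    pathWeight A p n ≤ star A (p 0) (p n) := by
  refine le_trans ?_ (le_iSup _ n)
  refine le_trans ?_ (le_iSup _ p)
  exact le_iSup (fun _ : p 0 = p 0 ∧ p n = p n => pathWeight A p n) ⟨rfl, rfl⟩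

lemma pathWeight_le_plus (A : S → S → EReal) (p : ℕ → S) (n : ℕ) (hn : 1 ≤ n) :
    pathWeight A p n ≤ plus A (p 0) (p n) := by
  refine le_trans ?_ (le_iSup _ n)
  refine le_trans ?_ (le_iSup _ hn)
  refine le_trans ?_ (le_iSup _ p)
  exact le_iSup (fun _ : p 0 = p 0 ∧ p n = p n => pathWeight A p n) ⟨rfl, rfl⟩

lemma star_le_iff {A : S → S → EReal} {i j : S} {u : EReal} :
    star A i j ≤ u ↔ ∀ (n : ℕ) (p : ℕ → S), p 0 = i → p n = j → pathWeight A p n ≤ u := by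
  constructor
  · intro h n p h0 hn
    refine le_trans ?_ h
    subst h0; subst hn
    exact pathWeight_le_star A p n
  · intro h
    exact iSup_le fun n => iSup_le fun p => iSup_le fun hp => h n p hp.1 hp.2

lemma plus_le_iff {A : S → S → EReal} {i j : S} {u : EReal} :
    plus A i j ≤ u ↔ ∀ (n : ℕ) (p : ℕ → S), 1 ≤ n → p 0 = i → p n = j → pathWeight A p n ≤ u := by
  constructor
  · intro h n p hn h0 hj
    refine le_trans ?_ h
    subst h0; subst hj
    exact pathWeight_le_plus A p n hn
  · intro h
    exact iSup_le fun n => iSup_le fun hn => iSup_le fun p => iSup_le fun hp => h n p hn hp.1 hp.2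

lemma lt_star_iff {A : S → S → EReal} {i j : S} {c : EReal} :
    c < star A i j ↔ ∃ (n : ℕ) (p : ℕ → S), p 0 = i ∧ p n = j ∧ c < pathWeight A p n := by
  constructor
  · intro h
    by_contra hc
    push_neg at hc
    have : star A i j ≤ c := star_le_iff.2 fun n p h0 hn => hc n p h0 hn
    exact absurd h (not_lt.2 this)
  · rintro ⟨n, p, h0, hn, hc⟩
    refine lt_of_lt_of_le hc ?_
    subst h0; subst hn; exact pathWeight_le_star A p n

lemma lt_plus_iff {A : S → S → EReal} {i j : S} {c : EReal} :
    c < plus A i j ↔ ∃ (n : ℕ) (p : ℕ → S), 1 ≤ n ∧ p 0 = i ∧ p n = j ∧ c < pathWeight A p n := by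
  constructor
  · intro h
    by_contra hc
    push_neg at hc
    have : plus A i j ≤ c := plus_le_iff.2 fun n p hn h0 hj => hc n p hn h0 hj
    exact absurd h (not_lt.2 this)
  · rintro ⟨n, p, hn, h0, hj, hc⟩
    refine lt_of_lt_of_le hc ?_
    subst h0; subst hj; exact pathWeight_le_plus A p n hn

lemma star_nonneg (A : S → S → EReal) (i : S) : (0 : EReal) ≤ star A i i := by
  have h : pathWeight A (fun _ => i) 0 = 0 := by simp [pathWeight]
  have := pathWeight_le_star A (fun _ => i) 0
  rwa [h] at this

lemma plus_le_star (A : S → S → EReal) (i j : S) : plus A i j ≤ star A i j :=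
  plus_le_iff.2 fun n p _ h0 hj => by subst h0; subst hj; exact pathWeight_le_star A p n

/-- concatenation of two paths -/
lemma pathWeight_concat (A : S → S → EReal) (p q : ℕ → S) (n m : ℕ) (hpq : p n = q 0) :
    pathWeight A (fun t => if t < n then p t else q (t - n)) (n + m)
      = pathWeight A p n + pathWeight A q m := by
  unfold pathWeight
  rw [Finset.sum_range_add]
  congr 1
  · apply Finset.sum_congr rfl
    intro t ht
    rw [Finset.mem_range] at ht
    show A (if t < n then p t else q (t - n)) (if t + 1 < n then p (t+1) else q (t + 1 - n))
        = A (p t) (p (t + 1))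
    have h1 : (if t < n then p t else q (t - n)) = p t := if_pos ht
    by_cases h2 : t + 1 < n
    · rw [h1, if_pos h2]
    · have h3 : t + 1 = n := by omega
      rw [h1, if_neg h2, h3, Nat.sub_self, ← hpq]
  · apply Finset.sum_congr rfl
    intro t _
    show A (if n + t < n then p (n+t) else q (n + t - n))
        (if n + t + 1 < n then p (n+t+1) else q (n + t + 1 - n)) = A (q t) (q (t + 1))
    have h1 : ¬ (n + t < n) := by omega
    have h2 : ¬ (n + t + 1 < n) := by omega
    rw [if_neg h1, if_neg h2]
    congr 2 <;> omega

/-- `A*_{ik} + A⁺_{kj} ≤ A⁺_{ij}` -/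
lemma star_add_plus_le (A : S → S → EReal) (i k j : S) :
    star A i k + plus A k j ≤ plus A i j := by
  refine EReal.add_le_of_forall_lt (fun a' ha' b' hb' => ?_)
  rcases lt_star_iff.1 ha' with ⟨n, p, h0, hn, hpa⟩
  rcases lt_plus_iff.1 hb' with ⟨m, q, hm, hq0, hqm, hqb⟩
  have hcat := pathWeight_concat A p q n m (by rw [hn, hq0])
  have hle : pathWeight A p n + pathWeight A q m ≤ plus A i j := by
    rw [← hcat]
    have h0' : (fun t => if t < n then p t else q (t - n)) 0 = i := by
      by_cases hn0 : 0 < n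
      · simpa [hn0] using h0
      · have hn0' : n = 0 := by omega
        subst hn0'
        show q (0 - 0) = i
        rw [Nat.sub_self, hq0, ← hn, h0]
    have hm' : (fun t => if t < n then p t else q (t - n)) (n + m) = j := by
      have : ¬ (n + m < n) := by omega
      simp only [this, if_false]
      rw [Nat.add_sub_cancel_left, hqm]
    calc pathWeight A (fun t => if t < n then p t else q (t - n)) (n + m)
        ≤ plus A ((fun t => if t < n then p t else q (t - n)) 0)
            ((fun t => if t < n then p t else q (t - n)) (n + m)) :=
          pathWeight_le_plus A _ _ (by omega)
      _ = plus A i j := by rw [h0', hm']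
  exact le_trans (add_le_add hpa.le hqb.le) hle

/-- `A*_{ik} + A_{kj} ≤ A*_{ij}` (append one step) -/
lemma star_add_single_le (A : S → S → EReal) (i k j : S) :
    star A i k + A k j ≤ star A i j := by
  have h1 : A k j ≤ plus A k j := by
    have : pathWeight A (fun t => if t = 0 then k else j) 1 = A k j := by
      simp [pathWeight]
    rw [← this]
    have := pathWeight_le_plus A (fun t => if t = 0 then k else j) 1 le_rfl
    simpa using this
  calc star A i k + A k j ≤ star A i k + plus A k j := add_le_add_right h1 _
    _ ≤ plus A i j := star_add_plus_le A i k j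
    _ ≤ star A i j := plus_le_star A i j

/-- `A⁺_{ik} + A*_{kj} ≤ A⁺_{ij}` -/
lemma plus_add_star_le (A : S → S → EReal) (i k j : S) :
    plus A i k + star A k j ≤ plus A i j := by
  refine EReal.add_le_of_forall_lt (fun a' ha' b' hb' => ?_)
  rcases lt_plus_iff.1 ha' with ⟨n, p, hn1, h0, hn, hpa⟩
  rcases lt_star_iff.1 hb' with ⟨m, q, hq0, hqm, hqb⟩
  have hcat := pathWeight_concat A p q n m (by rw [hn, hq0])
  have hle : pathWeight A p n + pathWeight A q m ≤ plus A i j := by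
    rw [← hcat]
    have h0' : (fun t => if t < n then p t else q (t - n)) 0 = i := by
      have : 0 < n := by omega
      simpa [this] using h0
    have hm' : (fun t => if t < n then p t else q (t - n)) (n + m) = j := by
      have : ¬ (n + m < n) := by omega
      simp only [this, if_false]
      rw [Nat.add_sub_cancel_left, hqm]
    calc pathWeight A (fun t => if t < n then p t else q (t - n)) (n + m)
        ≤ plus A ((fun t => if t < n then p t else q (t - n)) 0)
            ((fun t => if t < n then p t else q (t - n)) (n + m)) :=
          pathWeight_le_plus A _ _ (by omega)
      _ = plus A i j := by rw [h0', hm']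
  exact le_trans (add_le_add hpa.le hqb.le) hle

lemma single_le_plus (A : S → S → EReal) (i k : S) : A i k ≤ plus A i k := by
  have h : pathWeight A (fun t => if t = 0 then i else k) 1 = A i k := by
    simp [pathWeight]
  rw [← h]
  have := pathWeight_le_plus A (fun t => if t = 0 then i else k) 1 le_rfl
  simpa using this

/-- `A_{ik} + A*_{kj} ≤ A⁺_{ij}` (prepend one step) -/
lemma single_add_star_le (A : S → S → EReal) (i k j : S) :
    A i k + star A k j ≤ plus A i j :=
  le_trans (add_le_add_left (single_le_plus A i k) _) (plus_add_star_le A i k j)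

/-- `A⁺_{ij} ≤ ⨆ k, A_{ik} + A*_{kj}` -/
lemma plus_le_iSup_single (A : S → S → EReal) (i j : S) :
    plus A i j ≤ ⨆ k, A i k + star A k j := by
  refine plus_le_iff.2 fun n p hn h0 hj => ?_
  have hshift : pathWeight A p n = A (p 0) (p 1) + pathWeight A (fun m => p (m + 1)) (n - 1) := by
    unfold pathWeight
    have hn' : n = (n - 1) + 1 := by omega
    rw [hn', Finset.sum_range_succ' (fun k => A (p k) (p (k + 1))) (n-1)]
    rw [add_comm]
    rfl
  rw [hshift, h0]
  refine le_trans ?_ (le_iSup _ (p 1))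
  refine add_le_add_right ?_ _
  have h0' : (fun m => p (m + 1)) 0 = p 1 := rfl
  have hj' : (fun m => p (m + 1)) (n - 1) = j := by simp only []; rw [show n - 1 + 1 = n by omega, hj]
  calc pathWeight A (fun m => p (m + 1)) (n - 1)
      ≤ star A ((fun m => p (m+1)) 0) ((fun m => p (m+1)) (n-1)) := pathWeight_le_star A _ _
    _ = star A (p 1) j := by rw [h0', hj']

end MaxPlus
namespace MaxPlus
open Filter Topology
variable {S : Type*}

/-! ### Superharmonic vectors and paths -/

/-- superharmonic (pointwise form) along a path -/
lemma pathWeight_add_le_of_superharm {A : S → S → EReal} {u : S → EReal}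
    (hu : ∀ i j, A i j + u j ≤ u i) (p : ℕ → S) (n : ℕ) :
    pathWeight A p n + u (p n) ≤ u (p 0) := by
  induction n with
  | zero => simp [pathWeight]
  | succ n ih =>
    have h1 : pathWeight A p (n+1) = pathWeight A p n + A (p n) (p (n+1)) :=
      Finset.sum_range_succ _ n
    calc pathWeight A p (n+1) + u (p (n+1))
        = pathWeight A p n + (A (p n) (p (n+1)) + u (p (n+1))) := by rw [h1, add_assoc]
      _ ≤ pathWeight A p n + u (p n) := add_le_add_right (hu _ _) _
      _ ≤ u (p 0) := ih

/-- `A*_{ij} + u_j ≤ u_i` for superharmonic `u` -/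
lemma star_add_le_of_superharm {A : S → S → EReal} {u : S → EReal}
    (hu : ∀ i j, A i j + u j ≤ u i) (i j : S) :
    star A i j + u j ≤ u i := by
  refine EReal.add_le_of_forall_lt (fun a' ha' b' hb' => ?_)
  rcases lt_star_iff.1 ha' with ⟨n, p, h0, hn, hpa⟩
  have := pathWeight_add_le_of_superharm hu p n
  rw [h0, hn] at this
  exact le_trans (add_le_add hpa.le hb'.le) this

/-- `A⁺_{ij} + u_j ≤ u_i` for superharmonic `u` -/
lemma plus_add_le_of_superharm {A : S → S → EReal} {u : S → EReal}
    (hu : ∀ i j, A i j + u j ≤ u i) (i j : S) :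
    plus A i j + u j ≤ u i :=
  le_trans (add_le_add_left (plus_le_star A i j) _) (star_add_le_of_superharm hu i j)

/-! ### Facts from left-superharmonicity of π -/

lemma pi_single (A : S → S → EReal) {π : S → ℝ} (hπ : LeftSuperharmonic A π) (i j : S) :
    (π i : EReal) + A i j ≤ (π j : EReal) :=
  le_trans (le_iSup (fun i => (π i : EReal) + A i j) i) (hπ j)

lemma pi_pathWeight (A : S → S → EReal) {π : S → ℝ} (hπ : LeftSuperharmonic A π)
    (p : ℕ → S) (n : ℕ) :
    (π (p 0) : EReal) + pathWeight A p n ≤ (π (p n) : EReal) := by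
  induction n with
  | zero => simp [pathWeight]
  | succ n ih =>
    have h1 : pathWeight A p (n+1) = pathWeight A p n + A (p n) (p (n+1)) :=
      Finset.sum_range_succ _ n
    calc (π (p 0) : EReal) + pathWeight A p (n+1)
        = ((π (p 0) : EReal) + pathWeight A p n) + A (p n) (p (n+1)) := by rw [h1, add_assoc]
      _ ≤ (π (p n) : EReal) + A (p n) (p (n+1)) := add_le_add_left ih _
      _ ≤ (π (p (n+1)) : EReal) := pi_single A hπ _ _

lemma pi_star (A : S → S → EReal) {π : S → ℝ} (hπ : LeftSuperharmonic A π) (i j : S) :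
    (π i : EReal) + star A i j ≤ (π j : EReal) := by
  refine ereal_add_iSup_le _ _ _ fun n => ereal_add_iSup_le _ _ _ fun p =>
    ereal_add_iSup_le _ _ _ fun hp => ?_
  have := pi_pathWeight A hπ p n
  rw [hp.1, hp.2] at this
  exact this

lemma star_ne_top (A : S → S → EReal) {π : S → ℝ} (hπ : LeftSuperharmonic A π) (i j : S) :
    star A i j ≠ ⊤ := by
  intro h
  have := pi_star A hπ i j
  rw [h] at this
  have h2 : ((π i : EReal) + ⊤) = ⊤ := EReal.add_top_of_ne_bot (by simp)
  rw [h2] at this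
  exact absurd (lt_of_le_of_lt this (EReal.coe_lt_top _)) (lt_irrefl _)

lemma plus_ne_top (A : S → S → EReal) {π : S → ℝ} (hπ : LeftSuperharmonic A π) (i j : S) :
    plus A i j ≠ ⊤ := fun h =>
  star_ne_top A hπ i j (top_le_iff.1 (h ▸ plus_le_star A i j))

/-! ### Martin kernel facts -/

lemma K_add_pi (A : S → S → EReal) (π : S → ℝ) (i j : S) :
    K A π i j + (π j : EReal) = star A i j :=
  ereal_sub_add_cancel _ _

lemma Kflat_add_pi (A : S → S → EReal) (π : S → ℝ) (i j : S) :
    Kflat A π i j + (π j : EReal) = plus A i j :=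
  ereal_sub_add_cancel _ _

lemma Kflat_le_K (A : S → S → EReal) (π : S → ℝ) (i j : S) :
    Kflat A π i j ≤ K A π i j :=
  EReal.sub_le_sub (plus_le_star A i j) le_rfl

lemma K_ne_top (A : S → S → EReal) {π : S → ℝ} (hπ : LeftSuperharmonic A π) (i j : S) :
    K A π i j ≠ ⊤ := by
  intro h
  have h1 : K A π i j + (π j : EReal) = ⊤ := by
    rw [h]; exact EReal.top_add_of_ne_bot (by simp)
  rw [K_add_pi] at h1
  exact star_ne_top A hπ i j h1

lemma pi_add_K_le (A : S → S → EReal) {π : S → ℝ} (hπ : LeftSuperharmonic A π) (i j : S) :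
    (π i : EReal) + K A π i j ≤ 0 := by
  have h : (π i : EReal) + K A π i j = ((π i : EReal) + star A i j) - (π j : EReal) := by
    unfold K; rw [ereal_add_sub_assoc]
  rw [h]
  rw [ereal_sub_le_iff]
  have := pi_star A hπ i j
  simpa using this

lemma K_le_neg_pi (A : S → S → EReal) {π : S → ℝ} (hπ : LeftSuperharmonic A π) (i j : S) :
    K A π i j ≤ ((-π i : ℝ) : EReal) := by
  have h := pi_add_K_le A hπ i j
  have h2 : K A π i j = ((π i : EReal) + K A π i j) - (π i : EReal) := by
    rw [add_comm, EReal.add_sub_cancel_right]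
  rw [h2, ereal_sub_le_iff, ← EReal.coe_add, neg_add_cancel]
  exact h

lemma zero_le_pi_add_K_diag (A : S → S → EReal) (π : S → ℝ) (j : S) :
    (0 : EReal) ≤ (π j : EReal) + K A π j j := by
  have h1 : (0 : EReal) ≤ star A j j := star_nonneg A j
  have h2 : (π j : EReal) + K A π j j = star A j j := by
    rw [add_comm, K_add_pi]
  rw [h2]
  exact h1

/-- the columns are superharmonic: `A_{ik} + K_{kj} ≤ K_{ij}` -/
lemma col_superharm (A : S → S → EReal) (π : S → ℝ) (i k j : S) :
    A i k + K A π k j ≤ K A π i j := by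
  unfold K
  rw [ereal_add_sub_assoc]
  refine EReal.sub_le_sub ?_ le_rfl
  exact le_trans (single_add_star_le A i k j) (plus_le_star A i j)

/-- `A_{ik} + K_{kj} ≤ K♭_{ij}` -/
lemma single_add_K_le_Kflat (A : S → S → EReal) (π : S → ℝ) (i k j : S) :
    A i k + K A π k j ≤ Kflat A π i j := by
  unfold K Kflat
  rw [ereal_add_sub_assoc]
  exact EReal.sub_le_sub (single_add_star_le A i k j) le_rfl

/-- `A*_{ik} + K♭_{kj} ≤ K♭_{ij}` -/
lemma star_add_Kflat_le (A : S → S → EReal) (π : S → ℝ) (i k j : S) :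
    star A i k + Kflat A π k j ≤ Kflat A π i j := by
  unfold Kflat
  rw [ereal_add_sub_assoc]
  exact EReal.sub_le_sub (star_add_plus_le A i k j) le_rfl

/-- normalisation of the columns -/
lemma col_normalised (A : S → S → EReal) {π : S → ℝ} (hπ : LeftSuperharmonic A π) (j : S) :
    (⨆ i, (π i : EReal) + K A π i j) = 0 :=
  le_antisymm (iSup_le fun i => pi_add_K_le A hπ i j)
    (le_trans (zero_le_pi_add_K_diag A π j) (le_iSup (fun i => (π i : EReal) + K A π i j) j))

end MaxPlus
namespace MaxPlus
open Filter Topology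
variable {S : Type*}

/-! ### Topology helpers -/

lemma isOpen_gt_coord (i : S) (c : EReal) : IsOpen {u : S → EReal | c < u i} :=
  isOpen_lt continuous_const (continuous_apply i)

lemma isOpen_lt_coord (i : S) (c : EReal) : IsOpen {u : S → EReal | u i < c} :=
  isOpen_lt (continuous_apply i) continuous_const

lemma martin_exists_col {A : S → S → EReal} {π : S → ℝ} {w : S → EReal}
    (hw : w ∈ martin A π) {W : Set (S → EReal)} (hW : W ∈ 𝓝 w) :
    ∃ j, (fun i => K A π i j) ∈ W := by
  rcases mem_closure_iff_nhds.1 hw W hW with ⟨u, huW, j, hj⟩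
  refine ⟨j, ?_⟩
  have : (fun i => K A π i j) = u := hj
  rw [this]
  exact huW

/-! ### Facts about elements of the Martin space -/

lemma martin_le_neg_pi {A : S → S → EReal} {π : S → ℝ} (hπ : LeftSuperharmonic A π)
    {w : S → EReal} (hw : w ∈ martin A π) (i : S) : w i ≤ ((-π i : ℝ) : EReal) := by
  by_contra h
  push_neg at h
  have hW : {u : S → EReal | ((-π i : ℝ) : EReal) < u i} ∈ 𝓝 w :=
    (isOpen_gt_coord i _).mem_nhds h
  rcases martin_exists_col hw hW with ⟨j, hj⟩
  exact absurd (K_le_neg_pi A hπ i j) (not_le.2 hj)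

lemma martin_ne_top {A : S → S → EReal} {π : S → ℝ} (hπ : LeftSuperharmonic A π)
    {w : S → EReal} (hw : w ∈ martin A π) (i : S) : w i ≠ ⊤ :=
  fun h => by
    have := martin_le_neg_pi hπ hw i
    rw [h] at this
    exact absurd (lt_of_le_of_lt this (EReal.coe_lt_top _)) (lt_irrefl _)

lemma martin_pi_add_le {A : S → S → EReal} {π : S → ℝ} (hπ : LeftSuperharmonic A π)
    {w : S → EReal} (hw : w ∈ martin A π) (i : S) : (π i : EReal) + w i ≤ 0 := by
  have h := martin_le_neg_pi hπ hw i
  calc (π i : EReal) + w i ≤ (π i : EReal) + ((-π i : ℝ) : EReal) := add_le_add_right h _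
    _ = 0 := by rw [← EReal.coe_add]; norm_num

lemma martin_superharm {A : S → S → EReal} {π : S → ℝ}
    {w : S → EReal} (hw : w ∈ martin A π) (i k : S) : A i k + w k ≤ w i := by
  by_cases hbot : A i k = ⊥
  · rw [hbot, EReal.bot_add]; exact bot_le
  refine ereal_add_le_of_forall_real (A i k) (w k) (w i) (fun c hc => ?_)
  by_contra hlt
  push_neg at hlt
  rcases exists_between hlt with ⟨z, hz1, hz2⟩
  have hW : ({u : S → EReal | (c : EReal) < u k} ∩ {u : S → EReal | u i < z}) ∈ 𝓝 w := by
    refine Filter.inter_mem ((isOpen_gt_coord k _).mem_nhds hc) ((isOpen_lt_coord i _).mem_nhds ?_)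
    exact hz1
  rcases martin_exists_col hw hW with ⟨j, hj1, hj2⟩
  simp only [Set.mem_setOf_eq] at hj1 hj2
  have h1 : A i k + (c : EReal) ≤ K A π i j :=
    le_trans (add_le_add_right hj1.le _) (col_superharm A π i k j)
  exact absurd (lt_of_le_of_lt (le_trans h1 hj2.le) hz2) (lt_irrefl _)

/-! ### mu lemmas -/

lemma mu_le_sup (A : S → S → EReal) (π : S → ℝ) (u w : S → EReal) :
    mu A π u w ≤ ⨆ j, ((π j : EReal) + u j) := by
  refine le_trans (iInf_le _ Set.univ) ?_
  refine le_trans (iInf_le _ univ_mem) ?_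
  exact iSup_le fun j => iSup_le fun _ => le_iSup (fun j => (π j : EReal) + u j) j

lemma mu_mono (A : S → S → EReal) (π : S → ℝ) {u v : S → EReal} (h : ∀ j, u j ≤ v j)
    (w : S → EReal) : mu A π u w ≤ mu A π v w := by
  refine iInf_mono fun W => iInf_mono fun _ => iSup_mono fun j => iSup_mono fun _ => ?_
  exact add_le_add_right (h j) _

lemma mu_le_of_nhds {A : S → S → EReal} {π : S → ℝ} {u w : S → EReal}
    {W : Set (S → EReal)} (hW : W ∈ 𝓝 w) :
    mu A π u w ≤ ⨆ (j : S) (_ : (fun i => K A π i j) ∈ W), ((π j : EReal) + u j) :=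
  le_trans (iInf_le _ W) (iInf_le _ hW)

lemma le_mu (A : S → S → EReal) (π : S → ℝ) (u w : S → EReal) (c : EReal)
    (h : ∀ W ∈ 𝓝 w, ∃ j, (fun i => K A π i j) ∈ W ∧ c ≤ (π j : EReal) + u j) :
    c ≤ mu A π u w := by
  refine le_iInf fun W => le_iInf fun hW => ?_
  rcases h W hW with ⟨j, hjW, hj⟩
  refine le_trans hj (le_trans ?_
    (le_iSup (fun j => ⨆ (_ : (fun i => K A π i j) ∈ W), ((π j : EReal) + u j)) j))
  exact le_iSup (fun _ : (fun i => K A π i j) ∈ W => (π j : EReal) + u j) hjW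

/-- KEY LEMMA: for superharmonic `u`, `μ_u(w) + w_i ≤ u_i` (for arbitrary `w`). -/
lemma mu_add_le_of_superharm {A : S → S → EReal} {π : S → ℝ} {u : S → EReal}
    (hu : ∀ i j, A i j + u j ≤ u i) (w : S → EReal) (i : S) :
    mu A π u w + w i ≤ u i := by
  refine ereal_add_le_of_forall_real _ _ _ (fun c hc => ?_)
  have hW : {u' : S → EReal | (c : EReal) < u' i} ∈ 𝓝 w := (isOpen_gt_coord i _).mem_nhds hc
  rw [add_comm]
  refine le_trans (add_le_add_right (mu_le_of_nhds hW) _) ?_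
  refine ereal_add_iSup_le _ _ _ fun j => ereal_add_iSup_le _ _ _ fun hj => ?_
  simp only [Set.mem_setOf_eq] at hj
  have h1 : K A π i j + ((π j : EReal) + u j) ≤ u i := by
    rw [← add_assoc, K_add_pi]
    exact star_add_le_of_superharm hu i j
  exact le_trans (add_le_add_left hj.le _) h1

/-! ### flat lemmas -/

lemma le_flat (A : S → S → EReal) (π : S → ℝ) (w : S → EReal) (i : S) (c : EReal)
    {W : Set (S → EReal)} (hW : W ∈ 𝓝 w)
    (h : ∀ j, (fun i' => K A π i' j) ∈ W → c ≤ Kflat A π i j) :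
    c ≤ flat A π w i := by
  refine le_trans ?_ (le_trans (le_iSup _ hW)
    (le_iSup (fun W => ⨆ (_ : W ∈ 𝓝 w), ⨅ (j : S) (_ : (fun i' => K A π i' j) ∈ W), Kflat A π i j) W))
  exact le_iInf fun j => le_iInf fun hj => h j hj

/-- `A_{jl} + w_l ≤ w♭_j` for every `w` -/
lemma single_add_le_flat (A : S → S → EReal) (π : S → ℝ) (w : S → EReal) (j l : S) :
    A j l + w l ≤ flat A π w j := by
  refine ereal_add_le_of_forall_real _ _ _ (fun c hc => ?_)
  have hW : {u : S → EReal | (c : EReal) < u l} ∈ 𝓝 w := (isOpen_gt_coord l _).mem_nhds hc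
  refine le_flat A π w j _ hW (fun k hk => ?_)
  simp only [Set.mem_setOf_eq] at hk
  exact le_trans (add_le_add_right hk.le _) (single_add_K_le_Kflat A π j l k)

/-- inequality (G): `star_{ik} + w♭_k ≤ w♭_i` for every `w`. -/
lemma star_add_flat_le_flat (A : S → S → EReal) (π : S → ℝ) (w : S → EReal) (i k : S) :
    star A i k + flat A π w k ≤ flat A π w i := by
  refine ereal_add_iSup_le _ _ _ fun W => ereal_add_iSup_le _ _ _ fun hW => ?_
  refine le_flat A π w i _ hW (fun j hj => ?_)
  calc star A i k + ⨅ (j' : S) (_ : (fun i' => K A π i' j') ∈ W), Kflat A π k j'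
      ≤ star A i k + Kflat A π k j :=
        add_le_add_right (le_trans (iInf_le _ j) (iInf_le _ hj)) _
    _ ≤ Kflat A π i j := star_add_Kflat_le A π i k j

/-- `K_{ik} + π_k + w♭_k ≤ w♭_i` version of (G) -/
lemma K_add_flat_le_flat (A : S → S → EReal) (π : S → ℝ) (w : S → EReal) (i k : S) :
    K A π i k + ((π k : EReal) + flat A π w k) ≤ flat A π w i := by
  rw [← add_assoc, K_add_pi]
  exact star_add_flat_le_flat A π w i k

/-- on the Martin space, `w♭ ≤ w` -/
lemma flat_le_self {A : S → S → EReal} {π : S → ℝ} (hπ : LeftSuperharmonic A π)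
    {w : S → EReal} (hw : w ∈ martin A π) (i : S) : flat A π w i ≤ w i := by
  refine iSup_le fun W => iSup_le fun hW => ?_
  refine ereal_le_of_forall_real_gt _ _ (fun c hc => ?_)
  have hW' : (W ∩ {u : S → EReal | u i < (c : EReal)}) ∈ 𝓝 w :=
    Filter.inter_mem hW ((isOpen_lt_coord i _).mem_nhds hc)
  rcases martin_exists_col hw hW' with ⟨j, hj1, hj2⟩
  simp only [Set.mem_setOf_eq] at hj2
  refine le_trans (le_trans (iInf_le _ j) (iInf_le _ hj1)) ?_
  exact le_trans (Kflat_le_K A π i j) hj2.le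

end MaxPlus
namespace MaxPlus
open Filter Topology
variable {S : Type*}

/-- If `H♭(w,w) = 0` then every neighbourhood of `w` a.s. carries mass:
`∀ W ∈ 𝓝 w, ∀ ε > 0, ∃ j` column in `W` with `π j + w♭ j > -ε`. -/
lemma exists_col_flat_big {A : S → S → EReal} {π : S → ℝ} {w : S → EReal}
    (hH : Hflat A π w w = 0) {W : Set (S → EReal)} (hW : W ∈ 𝓝 w) {ε : ℝ} (hε : 0 < ε) :
    ∃ j, (fun i => K A π i j) ∈ W ∧ ((-ε : ℝ) : EReal) < (π j : EReal) + flat A π w j := by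
  have h1 : (0 : EReal) ≤ ⨆ (j : S) (_ : (fun i => K A π i j) ∈ W),
      ((π j : EReal) + flat A π w j) := by
    rw [← hH]
    exact mu_le_of_nhds hW
  have h2 : ((-ε : ℝ) : EReal) < ⨆ (j : S) (_ : (fun i => K A π i j) ∈ W),
      ((π j : EReal) + flat A π w j) := lt_of_lt_of_le (by exact_mod_cast neg_neg_iff_pos.2 hε) h1
  rcases lt_iSup_iff.1 h2 with ⟨j, hj⟩
  rcases lt_iSup_iff.1 hj with ⟨hjW, hjv⟩
  exact ⟨j, hjW, hjv⟩

/-- On the minimal Martin space, `w ≤ w♭`. -/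
lemma self_le_flat {A : S → S → EReal} {π : S → ℝ}
    {w : S → EReal} (hw : w ∈ martinMin A π) (i : S) : w i ≤ flat A π w i := by
  refine ereal_le_of_forall_real_lt _ _ (fun c hc => ?_)
  refine ereal_le_of_forall_real_lt _ _ (fun c' hc' => ?_)
  set ε : ℝ := c - c' with hε
  have hεpos : 0 < ε := by
    have := EReal.coe_lt_coe_iff.1 hc'
    simp only [hε]; linarith
  have hW : {u : S → EReal | (c : EReal) < u i} ∈ 𝓝 w := (isOpen_gt_coord i _).mem_nhds hc
  rcases exists_col_flat_big hw.2 hW hεpos with ⟨j, hjW, hjv⟩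
  simp only [Set.mem_setOf_eq] at hjW
  have h1 := K_add_flat_le_flat A π w i j
  have h2 : (c : EReal) + ((-ε : ℝ) : EReal) ≤ flat A π w i :=
    le_trans (add_le_add hjW.le hjv.le) h1
  rw [← EReal.coe_add] at h2
  refine le_trans ?_ h2
  apply EReal.coe_le_coe_iff.2
  simp [hε]

/-- On the minimal Martin space, `w` is harmonic. -/
lemma martinMin_harmonic {A : S → S → EReal} {π : S → ℝ} (hπ : LeftSuperharmonic A π)
    {w : S → EReal} (hw : w ∈ martinMin A π) (i : S) :
    (⨆ j, A i j + w j) = w i := by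
  refine le_antisymm (iSup_le fun j => martin_superharm hw.1 i j) ?_
  refine ereal_le_of_forall_real_lt _ _ (fun c hc => ?_)
  refine ereal_le_of_forall_real_lt _ _ (fun c' hc' => ?_)
  set ε : ℝ := (c - c') / 2 with hεdef
  have hεpos : 0 < ε := by
    have := EReal.coe_lt_coe_iff.1 hc'
    simp only [hεdef]; linarith
  -- w i = flat w i
  have hwflat : w i ≤ flat A π w i := self_le_flat hw i
  -- find a neighbourhood where K♭_{i·} is ≥ c
  have h1 : (c : EReal) < flat A π w i := lt_of_lt_of_le hc hwflat
  rcases lt_iSup_iff.1 h1 with ⟨W, hW⟩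
  rcases lt_iSup_iff.1 hW with ⟨hWn, hWv⟩
  -- find column j in W with π j + flat w j > -ε
  rcases exists_col_flat_big hw.2 hWn hεpos with ⟨j, hjW, hjv⟩
  -- K♭_{ij} ≥ c
  have h2 : (c : EReal) < Kflat A π i j :=
    lt_of_lt_of_le hWv (le_trans (iInf_le _ j) (iInf_le _ hjW))
  -- decompose plus A i j
  have h3 : (c : EReal) + (π j : EReal) < plus A i j := by
    rw [← Kflat_add_pi A π i j]
    exact EReal.add_lt_add_of_lt_of_le h2 le_rfl (by simp) (by simp)
  have h4 := lt_of_lt_of_le h3 (plus_le_iSup_single A i j)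
  rcases lt_iSup_iff.1 h4 with ⟨k, hk⟩
  -- chain:  A i k + w k ≥ A i k + flat w k ≥ A i k + (star k j + flat w j)
  have h5 : star A k j + flat A π w j ≤ flat A π w k := star_add_flat_le_flat A π w k j
  have h6 : flat A π w k ≤ w k := flat_le_self hπ hw.1 k
  have h7 : (A i k + star A k j) + flat A π w j ≤ A i k + w k := by
    rw [add_assoc]
    exact add_le_add_right (le_trans h5 h6) _
  have h8 : ((c : EReal) + (π j : EReal)) + flat A π w j ≤ A i k + w k :=
    le_trans (add_le_add_left hk.le _) h7
  have h9 : (c : EReal) + ((π j : EReal) + flat A π w j) ≤ A i k + w k := by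
    rw [← add_assoc]; exact h8
  have h10 : (c : EReal) + ((-ε : ℝ) : EReal) ≤ A i k + w k :=
    le_trans (add_le_add_right hjv.le _) h9
  rw [← EReal.coe_add] at h10
  refine le_trans ?_ (le_trans h10 (le_iSup (fun k => A i k + w k) k))
  apply EReal.coe_le_coe_iff.2
  simp only [hεdef]; linarith

/-- `μ_{max(u,v)}(w) = max (μ_u(w)) (μ_v(w))` -/
lemma mu_sup (A : S → S → EReal) (π : S → ℝ) (u v w : S → EReal) :
    mu A π (fun j => u j ⊔ v j) w = mu A π u w ⊔ mu A π v w := by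
  have hsup : ∀ W : Set (S → EReal),
      (⨆ (j : S) (_ : (fun i => K A π i j) ∈ W), ((π j : EReal) + (u j ⊔ v j)))
      = (⨆ (j : S) (_ : (fun i => K A π i j) ∈ W), ((π j : EReal) + u j))
        ⊔ (⨆ (j : S) (_ : (fun i => K A π i j) ∈ W), ((π j : EReal) + v j)) := by
    intro W
    rw [← iSup_sup_eq]
    congr 1
    funext j
    rw [← iSup_sup_eq]
    congr 1
    funext hj
    exact ereal_add_sup _ _ _
  have hmu : mu A π (fun j => u j ⊔ v j) w = ⨅ (W : Set (S → EReal)) (_ : W ∈ 𝓝 w),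
      ((⨆ (j : S) (_ : (fun i => K A π i j) ∈ W), ((π j : EReal) + u j))
        ⊔ (⨆ (j : S) (_ : (fun i => K A π i j) ∈ W), ((π j : EReal) + v j))) := by
    unfold mu
    refine iInf_congr fun W => iInf_congr fun _ => ?_
    exact hsup W
  rw [hmu]
  refine le_antisymm ?_ ?_
  · refine ereal_le_of_forall_real_gt _ _ (fun c hc => ?_)
    rcases iInf_lt_iff.1 (lt_of_le_of_lt le_sup_left hc) with ⟨W₁, hW₁'⟩
    rcases iInf_lt_iff.1 hW₁' with ⟨hW₁, hFW₁⟩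
    rcases iInf_lt_iff.1 (lt_of_le_of_lt le_sup_right hc) with ⟨W₂, hW₂'⟩
    rcases iInf_lt_iff.1 hW₂' with ⟨hW₂, hFW₂⟩
    refine le_trans (iInf_le _ (W₁ ∩ W₂))
      (le_trans (iInf_le _ (Filter.inter_mem hW₁ hW₂)) ?_)
    refine le_trans (sup_le_sup ?_ ?_) (sup_le hFW₁.le hFW₂.le)
    · refine iSup_le fun j => iSup_le fun hj => ?_
      exact le_trans (le_iSup (fun _ : (fun i => K A π i j) ∈ W₁ => (π j : EReal) + u j) hj.1)
        (le_iSup (fun j => ⨆ (_ : (fun i => K A π i j) ∈ W₁), ((π j : EReal) + u j)) j)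
    · refine iSup_le fun j => iSup_le fun hj => ?_
      exact le_trans (le_iSup (fun _ : (fun i => K A π i j) ∈ W₂ => (π j : EReal) + v j) hj.2)
        (le_iSup (fun j => ⨆ (_ : (fun i => K A π i j) ∈ W₂), ((π j : EReal) + v j)) j)
  · refine sup_le ?_ ?_
    · refine le_iInf fun W => le_iInf fun hW => ?_
      exact le_trans (le_trans (iInf_le _ W) (iInf_le _ hW)) le_sup_left
    · refine le_iInf fun W => le_iInf fun hW => ?_
      exact le_trans (le_trans (iInf_le _ W) (iInf_le _ hW)) le_sup_right

end MaxPlus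
namespace MaxPlus
open Filter Topology
variable {S : Type*}

lemma martinMin_mem_Hset {A : S → S → EReal} {π : S → ℝ} (hπ : LeftSuperharmonic A π)
    {w : S → EReal} (hw : w ∈ martinMin A π) : w ∈ Hset A π := by
  refine ⟨fun i => martin_ne_top hπ hw.1 i, fun i => martinMin_harmonic hπ hw i, ?_⟩
  refine lt_of_le_of_lt (iSup_le fun j => martin_pi_add_le hπ hw.1 j) ?_
  simp

lemma martinMin_mu_self {A : S → S → EReal} {π : S → ℝ} (hπ : LeftSuperharmonic A π)
    {w : S → EReal} (hw : w ∈ martinMin A π) : mu A π w w = 0 := by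
  refine le_antisymm ?_ ?_
  · refine le_trans (mu_le_sup A π w w) ?_
    exact iSup_le fun j => martin_pi_add_le hπ hw.1 j
  · rw [← hw.2]
    exact mu_mono A π (fun j => flat_le_self hπ hw.1 j) w

lemma martinMin_normalised {A : S → S → EReal} {π : S → ℝ} (hπ : LeftSuperharmonic A π)
    {w : S → EReal} (hw : w ∈ martinMin A π) : Normalised π w := by
  refine le_antisymm (iSup_le fun j => martin_pi_add_le hπ hw.1 j) ?_
  rw [← martinMin_mu_self hπ hw]
  exact mu_le_sup A π w w

lemma martinMin_forward {A : S → S → EReal} {π : S → ℝ} (hπ : LeftSuperharmonic A π)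
    {w : S → EReal} (hw : w ∈ martinMin A π) :
    ExtremalGen (Hset A π) w ∧ Normalised π w := by
  have hn := martinMin_normalised hπ hw
  refine ⟨⟨martinMin_mem_Hset hπ hw, ?_, ?_⟩, hn⟩
  · -- not identically ⊥
    intro hbot
    rw [hbot] at hn
    unfold Normalised at hn
    simp only [EReal.add_bot] at hn
    have : (⨆ _ : S, (⊥ : EReal)) ≤ ⊥ := iSup_le fun _ => le_rfl
    rw [hn] at this
    exact absurd this (by simp)
  · -- extremality
    intro u v hu hv heq
    have hule : ∀ i, u i ≤ w i := fun i => by rw [heq]; exact le_sup_left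
    have hvle : ∀ i, v i ≤ w i := fun i => by rw [heq]; exact le_sup_right
    have hmusup : mu A π u w ⊔ mu A π v w = 0 := by
      rw [← mu_sup]
      have : (fun j => u j ⊔ v j) = w := heq.symm
      rw [this]
      exact martinMin_mu_self hπ hw
    -- one of the two μ's equals 0
    have hcase : mu A π u w = 0 ∨ mu A π v w = 0 := by
      rcases le_total (mu A π u w) (mu A π v w) with h | h
      · right; rwa [sup_eq_right.2 h] at hmusup
      · left; rwa [sup_eq_left.2 h] at hmusup
    have key : ∀ z : S → EReal, z ∈ Hset A π → (∀ i, z i ≤ w i) → mu A π z w = 0 → w = z := by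
      intro z hz hzle hzmu
      funext i
      refine le_antisymm ?_ (hzle i)
      have hsh : ∀ i' j', A i' j' + z j' ≤ z i' := fun i' j' =>
        le_trans (le_iSup (fun j' => A i' j' + z j') j') (le_of_eq (hz.2.1 i'))
      have := mu_add_le_of_superharm (π := π) hsh w i
      rwa [hzmu, zero_add] at this
    rcases hcase with h | h
    · exact Or.inl (key u hu hule h)
    · exact Or.inr (key v hv hvle h)

end MaxPlus
namespace MaxPlus
open Filter Topology
variable {S : Type*}

/-- `ℋ` is closed under (bounded) arbitrary sups. -/
lemma hset_iSup {A : S → S → EReal} {π : S → ℝ} {ι : Sort*}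
    (u : ι → S → EReal) (hu : ∀ t, u t ∈ Hset A π) {b : S → EReal}
    (hble : ∀ t i, u t i ≤ b i) (hbtop : ∀ i, b i ≠ ⊤)
    (hbint : (⨆ j, ((π j : EReal) + b j)) < ⊤) :
    (fun i => ⨆ t, u t i) ∈ Hset A π := by
  refine ⟨?_, ?_, ?_⟩
  · intro i
    have h1 : (⨆ t, u t i) ≤ b i := iSup_le fun t => hble t i
    exact fun h => hbtop i (top_le_iff.1 (h ▸ h1))
  · intro i
    have h1 : ∀ j, A i j + (⨆ t, u t j) = ⨆ t, (A i j + u t j) := fun j =>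
      ereal_add_iSup _ _
    calc (⨆ j, A i j + ⨆ t, u t j) = ⨆ j, ⨆ t, (A i j + u t j) := by
          refine iSup_congr fun j => h1 j
      _ = ⨆ t, ⨆ j, (A i j + u t j) := iSup_comm
      _ = ⨆ t, u t i := iSup_congr fun t => (hu t).2.1 i
  · refine lt_of_le_of_lt ?_ hbint
    refine iSup_mono fun j => add_le_add_right (iSup_le fun t => hble t j) _

/-- `ℋ` is closed under adding real constants. -/
lemma hset_const_add {A : S → S → EReal} {π : S → ℝ} {u : S → EReal}
    (hu : u ∈ Hset A π) (c : ℝ) : (fun i => (c : EReal) + u i) ∈ Hset A π := by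
  refine ⟨?_, ?_, ?_⟩
  · intro i h
    have h2 : u i = ⊤ := by
      by_contra hne
      exact absurd h (ne_top_of_lt (EReal.add_lt_top (EReal.coe_ne_top c) hne))
    exact hu.1 i h2
  · intro i
    calc (⨆ j, A i j + ((c : EReal) + u j)) = ⨆ j, (c : EReal) + (A i j + u j) := by
          refine iSup_congr fun j => ?_
          rw [← add_assoc, add_comm (A i j) ((c : EReal)), add_assoc]
      _ = (c : EReal) + ⨆ j, (A i j + u j) := (ereal_add_iSup _ _).symm
      _ = (c : EReal) + u i := by rw [hu.2.1 i]
  · have h1 : (⨆ j, ((π j : EReal) + ((c : EReal) + u j)))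
        = (c : EReal) + ⨆ j, ((π j : EReal) + u j) := by
      rw [ereal_add_iSup]
      refine iSup_congr fun j => ?_
      rw [← add_assoc, add_comm ((π j : EReal)) ((c : EReal)), add_assoc]
    rw [h1]
    exact EReal.add_lt_top (EReal.coe_ne_top c) (ne_top_of_lt hu.2.2)

end MaxPlus
namespace MaxPlus
open Filter Topology
variable {S : Type*}

lemma normalised_pointwise {π : S → ℝ} {ξ : S → EReal} (h : Normalised π ξ) (j : S) :
    (π j : EReal) + ξ j ≤ 0 := by
  rw [← h]
  exact le_iSup (fun j => (π j : EReal) + ξ j) j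

lemma neg_pi_le_K_diag (A : S → S → EReal) (π : S → ℝ) (j : S) :
    ((-π j : ℝ) : EReal) ≤ K A π j j := by
  unfold K
  have h := star_nonneg A j
  calc ((-π j : ℝ) : EReal) = (0 : EReal) - (π j : EReal) := by
        rw [EReal.coe_neg, zero_sub]
    _ ≤ star A j j - (π j : EReal) := EReal.sub_le_sub h le_rfl

lemma ereal_sub_coe_add_coe (X : EReal) (p q : ℝ) :
    (X - (p : EReal)) + (q : EReal) = X + ((q - p : ℝ) : EReal) := by
  rw [sub_eq_add_neg, ← EReal.coe_neg, add_assoc, ← EReal.coe_add]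
  congr 2
  ring

lemma hflat_le_zero {A : S → S → EReal} {π : S → ℝ} (hπ : LeftSuperharmonic A π)
    {w : S → EReal} (hw : w ∈ martin A π) : Hflat A π w w ≤ 0 := by
  refine le_trans (mu_mono A π (fun j => flat_le_self hπ hw j) w) ?_
  exact le_trans (mu_le_sup A π w w) (iSup_le fun j => martin_pi_add_le hπ hw j)

/-- One step of the almost-geodesic construction. -/
lemma geo_step {A : S → S → EReal} {π : S → ℝ} {ξ : S → EReal} (hξ : ξ ∈ Hset A π)
    (i : S) (hi : ξ i ≠ ⊥) (δ : ℝ) (hδ : 0 < δ) :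
    ∃ j, ξ j ≠ ⊥ ∧ A i j ≠ ⊥ ∧ ξ i ≤ A i j + ξ j + (δ : EReal) := by
  have hlt : ξ i - (δ : EReal) < ξ i := by
    have h1 : ξ i ≠ ⊤ := hξ.1 i
    lift ξ i to ℝ using ⟨h1, hi⟩ with r hr
    rw [← EReal.coe_sub]
    exact_mod_cast sub_lt_self r hδ
  have hlt2 : ξ i - (δ : EReal) < ⨆ j, A i j + ξ j :=
    lt_of_lt_of_le hlt (le_of_eq (hξ.2.1 i).symm)
  rcases lt_iSup_iff.1 hlt2 with ⟨j, hj⟩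
  have hne : A i j + ξ j ≠ ⊥ := fun h => by
    rw [h] at hj
    exact not_lt_bot (lt_of_le_of_lt bot_le hj)
  refine ⟨j, fun h => hne (by rw [h, EReal.add_bot]), fun h => hne (by rw [h, EReal.bot_add]), ?_⟩
  rw [← ereal_sub_le_iff]
  exact hj.le

/-- The almost-geodesic construction: from `ξ ∈ ℋ` normalised, a base point and `ε`,
produce `w ∈ ℳᵐ` with good bounds. -/
lemma exists_martinMin_approx {A : S → S → EReal} (hA : ∀ i j, A i j ≠ ⊤) {π : S → ℝ}
    (hπ : LeftSuperharmonic A π) {ξ : S → EReal} (hξ : ξ ∈ Hset A π)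
    (hnorm : Normalised π ξ) (i₀ : S) (hi₀ : ξ i₀ ≠ ⊥) {ε : ℝ} (hε : 0 < ε) :
    ∃ w ∈ martinMin A π,
      ξ i₀ ≤ mu A π ξ w + w i₀ + (ε : EReal) := by
  classical
  -- the recursive sequence
  let T := {i : S // ξ i ≠ ⊥}
  have hstep' : ∀ (i : T) (k : ℕ), ∃ j : T,
      A i.1 j.1 ≠ ⊥ ∧ ξ i.1 ≤ A i.1 j.1 + ξ j.1 + ((ε * (2⁻¹:ℝ)^(k+1) : ℝ) : EReal) := by
    intro i k
    have hδ : 0 < ε * (2⁻¹:ℝ)^(k+1) := by positivity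
    rcases geo_step hξ i.1 i.2 _ hδ with ⟨j, hj1, hj2, hj3⟩
    exact ⟨⟨j, hj1⟩, hj2, hj3⟩
  let x : ℕ → T := fun k => Nat.rec ⟨i₀, hi₀⟩ (fun k xk => Classical.choose (hstep' xk k)) k
  have hxsucc : ∀ k, x (k+1) = Classical.choose (hstep' (x k) k) := fun k => rfl
  set xp : ℕ → S := fun k => (x k).1 with hxp
  have hx0 : xp 0 = i₀ := rfl
  have hAne : ∀ k, A (xp k) (xp (k+1)) ≠ ⊥ := fun k => (Classical.choose_spec (hstep' (x k) k)).1
  have hstep : ∀ k, ξ (xp k) ≤ A (xp k) (xp (k+1)) + ξ (xp (k+1))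
      + ((ε * (2⁻¹:ℝ)^(k+1) : ℝ) : EReal) := fun k => (Classical.choose_spec (hstep' (x k) k)).2
  -- real values
  set a : ℕ → ℝ := fun k => (A (xp k) (xp (k+1))).toReal with ha
  have hacoe : ∀ k, A (xp k) (xp (k+1)) = ((a k : ℝ) : EReal) := fun k =>
    (EReal.coe_toReal (hA _ _) (hAne k)).symm
  set r : ℕ → ℝ := fun k => (ξ (xp k)).toReal with hrdef
  have hrcoe : ∀ k, ξ (xp k) = ((r k : ℝ) : EReal) := fun k =>
    (EReal.coe_toReal (hξ.1 _) (x k).2).symm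
  -- real step inequality
  have hstep_r : ∀ k, r k ≤ a k + r (k+1) + ε * (2⁻¹:ℝ)^(k+1) := by
    intro k
    have := hstep k
    rw [hrcoe k, hacoe k, hrcoe (k+1), ← EReal.coe_add, ← EReal.coe_add] at this
    exact_mod_cast this
  -- π step inequality
  have hπa : ∀ k, π (xp k) + a k ≤ π (xp (k+1)) := by
    intro k
    have := pi_single A hπ (xp k) (xp (k+1))
    rw [hacoe k, ← EReal.coe_add] at this
    exact_mod_cast this
  -- path weight is real
  set Wr : ℕ → ℝ := fun k => ∑ m ∈ Finset.range k, a m with hWr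
  have hpath : ∀ k, pathWeight A xp k = ((Wr k : ℝ) : EReal) := by
    intro k
    induction k with
    | zero => simp [pathWeight, hWr]
    | succ k ih =>
      have h1 : pathWeight A xp (k+1) = pathWeight A xp k + A (xp k) (xp (k+1)) :=
        Finset.sum_range_succ _ k
      have h2 : Wr (k+1) = Wr k + a k := Finset.sum_range_succ _ k
      rw [h1, ih, hacoe k, h2, EReal.coe_add]
  -- telescoped inequality
  have htel : ∀ k, r 0 ≤ Wr k + r k + ε * (1 - (2⁻¹:ℝ)^k) := by
    intro k
    induction k with
    | zero => simp [hWr]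
    | succ k ih =>
      have h2 : Wr (k+1) = Wr k + a k := Finset.sum_range_succ _ k
      have h3 := hstep_r k
      have h4 : (2⁻¹:ℝ)^(k+1) + (1 - (2⁻¹:ℝ)^k) + (2⁻¹:ℝ)^(k+1) = 1 - (2⁻¹:ℝ)^(k+1) + (2⁻¹:ℝ)^(k+1) := by
        rw [pow_succ]
        ring
      nlinarith [ih, h3]
  have htel' : ∀ k, r 0 ≤ Wr k + r k + ε := by
    intro k
    refine le_trans (htel k) ?_
    have : (2⁻¹:ℝ)^k ≥ 0 := by positivity
    nlinarith
  -- π along the path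
  have hπW : ∀ k, π i₀ + Wr k ≤ π (xp k) := by
    intro k
    induction k with
    | zero => simp [hWr, hx0]
    | succ k ih =>
      have h2 : Wr (k+1) = Wr k + a k := Finset.sum_range_succ _ k
      have := hπa k
      rw [h2]
      linarith
  -- normalisation along the path
  have hnpath : ∀ k, π (xp k) + r k ≤ 0 := by
    intro k
    have := normalised_pointwise hnorm (xp k)
    rw [hrcoe k, ← EReal.coe_add] at this
    exact_mod_cast this
  -- the c sequence
  set c : ℕ → ℝ := fun k => π (xp k) - π i₀ - Wr k with hc
  have hcmono : Monotone c := by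
    refine monotone_nat_of_le_succ fun k => ?_
    have h2 : Wr (k+1) = Wr k + a k := Finset.sum_range_succ _ k
    have := hπa k
    simp only [hc, h2]
    linarith
  have hcbdd : BddAbove (Set.range c) := by
    refine ⟨-r 0 - π i₀ + ε, ?_⟩
    rintro y ⟨k, rfl⟩
    have h1 := htel' k
    have h2 := hnpath k
    simp only [hc]
    linarith
  set cI : ℝ := ⨆ k, c k with hcinf
  have hctend : Tendsto c atTop (𝓝 cI) := tendsto_atTop_ciSup hcmono hcbdd
  have hcle : ∀ k, c k ≤ cI := fun k => le_ciSup hcbdd k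
  -- the d sequences and their monotonicity
  set d : S → ℕ → EReal := fun i k => K A π i (xp k) + ((c k : ℝ) : EReal) with hd
  have hdmono : ∀ i, Monotone (d i) := by
    intro i
    refine monotone_nat_of_le_succ fun k => ?_
    have h2 : Wr (k+1) = Wr k + a k := Finset.sum_range_succ _ k
    have hKc : ∀ m, K A π i (xp m) + ((c m : ℝ) : EReal)
        = star A i (xp m) + ((c m - π (xp m) : ℝ) : EReal) := by
      intro m
      unfold K
      rw [ereal_sub_coe_add_coe]
    rw [hd]
    simp only []
    rw [hKc k, hKc (k+1)]
    have hcc : (c (k+1) - π (xp (k+1)) : ℝ) = (c k - π (xp k)) - a k := by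
      simp only [hc, h2]; ring
    rw [hcc]
    have h3 : star A i (xp k) + ((a k : ℝ) : EReal) ≤ star A i (xp (k+1)) := by
      rw [← hacoe k]
      exact star_add_single_le A i (xp k) (xp (k+1))
    calc star A i (xp k) + ((c k - π (xp k) : ℝ) : EReal)
        = (star A i (xp k) + ((a k : ℝ) : EReal)) + ((c k - π (xp k) - a k : ℝ) : EReal) := by
          rw [add_assoc, ← EReal.coe_add]
          congr 2
          ring
      _ ≤ star A i (xp (k+1)) + ((c k - π (xp k) - a k : ℝ) : EReal) := add_le_add_left h3 _
  -- the limit vector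
  set w : S → EReal := fun i => (⨆ k, d i k) - ((cI : ℝ) : EReal) with hw
  have htendi : ∀ i, Tendsto (fun k => K A π i (xp k)) atTop (𝓝 (w i)) := by
    intro i
    have hd1 : Tendsto (d i) atTop (𝓝 (⨆ k, d i k)) := tendsto_atTop_iSup (hdmono i)
    have hc1 : Tendsto (fun k => ((-c k : ℝ) : EReal)) atTop (𝓝 ((-cI : ℝ) : EReal)) :=
      EReal.tendsto_coe.2 (hctend.neg)
    have hadd : ContinuousAt (fun p : EReal × EReal => p.1 + p.2) ((⨆ k, d i k), ((-cI : ℝ) : EReal)) :=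
      EReal.continuousAt_add (Or.inr (EReal.coe_ne_bot _)) (Or.inr (EReal.coe_ne_top _))
    have h2 : Tendsto (fun k => d i k + ((-c k : ℝ) : EReal)) atTop
        (𝓝 ((⨆ k, d i k) + ((-cI : ℝ) : EReal))) :=
      (hadd.tendsto).comp (hd1.prodMk_nhds hc1)
    have h3 : ∀ k, d i k + ((-c k : ℝ) : EReal) = K A π i (xp k) := by
      intro k
      rw [hd]
      simp only []
      rw [add_assoc, ← EReal.coe_add]
      norm_num
    have h4 : (⨆ k, d i k) + ((-cI : ℝ) : EReal) = w i := by
      rw [hw]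
      simp only []
      rw [sub_eq_add_neg, EReal.coe_neg]
    rw [← h4]
    refine h2.congr fun k => h3 k
  have htend : Tendsto (fun k => (fun i => K A π i (xp k))) atTop (𝓝 w) :=
    tendsto_pi_nhds.2 htendi
  have hwmem : w ∈ martin A π :=
    mem_closure_of_tendsto htend (Filter.Eventually.of_forall fun k => ⟨xp k, rfl⟩)
  -- lower bound on K i₀ (xp k)
  have hKlow : ∀ k, ((r 0 - ε : ℝ) : EReal) ≤ K A π i₀ (xp k) := by
    intro k
    have h1 : ((Wr k : ℝ) : EReal) ≤ star A i₀ (xp k) := by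
      rw [← hpath k, ← hx0]
      exact pathWeight_le_star A xp k
    have h2 : ((Wr k - π (xp k) : ℝ) : EReal) ≤ K A π i₀ (xp k) := by
      unfold K
      rw [EReal.coe_sub]
      exact EReal.sub_le_sub h1 le_rfl
    refine le_trans ?_ h2
    apply EReal.coe_le_coe_iff.2
    have h3 := htel' k
    have h4 := hnpath k
    linarith
  have hwlb : ((r 0 - ε : ℝ) : EReal) ≤ w i₀ := ge_of_tendsto' (htendi i₀) hKlow
  -- w ∈ martinMin
  have hwlow : ∀ k, ((-π (xp (k+1)) + c (k+1) - cI : ℝ) : EReal) ≤ w (xp (k+1)) := by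
    intro k
    have h1 : d (xp (k+1)) (k+1) ≤ ⨆ m, d (xp (k+1)) m := le_iSup _ (k+1)
    have h2 : ((-π (xp (k+1)) + c (k+1) : ℝ) : EReal) ≤ d (xp (k+1)) (k+1) := by
      rw [hd]
      simp only []
      rw [EReal.coe_add]
      exact add_le_add_left (neg_pi_le_K_diag A π (xp (k+1))) _
    have h3 : ((-π (xp (k+1)) + c (k+1) - cI : ℝ) : EReal)
        = ((-π (xp (k+1)) + c (k+1) : ℝ) : EReal) - ((cI : ℝ) : EReal) := by
      rw [EReal.coe_sub]
    rw [hw, h3]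
    simp only []
    exact EReal.sub_le_sub (le_trans h2 h1) le_rfl
  have hflatlow : ∀ k, ((c k - cI : ℝ) : EReal) ≤ (π (xp k) : EReal) + flat A π w (xp k) := by
    intro k
    have h1 : A (xp k) (xp (k+1)) + w (xp (k+1)) ≤ flat A π w (xp k) :=
      single_add_le_flat A π w (xp k) (xp (k+1))
    have h2 : ((a k + (-π (xp (k+1)) + c (k+1) - cI) : ℝ) : EReal)
        ≤ A (xp k) (xp (k+1)) + w (xp (k+1)) := by
      rw [hacoe k, EReal.coe_add]
      exact add_le_add_right (hwlow k) _
    have h3 : (π (xp k) : EReal) + ((a k + (-π (xp (k+1)) + c (k+1) - cI) : ℝ) : EReal)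
        = ((π (xp k) + a k - π (xp (k+1)) + c (k+1) - cI : ℝ) : EReal) := by
      rw [← EReal.coe_add]
      congr 1
      ring
    have h4 : (π (xp k) + a k - π (xp (k+1)) + c (k+1) - cI : ℝ) = c k - cI := by
      have h2' : Wr (k+1) = Wr k + a k := Finset.sum_range_succ _ k
      have h5 : c (k+1) = π (xp (k+1)) - π i₀ - (Wr k + a k) := by
        rw [show c (k+1) = π (xp (k+1)) - π i₀ - Wr (k+1) from rfl, h2']
      have h6 : c k = π (xp k) - π i₀ - Wr k := rfl
      rw [h5, h6]
      ring
    calc ((c k - cI : ℝ) : EReal)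
        = (π (xp k) : EReal) + ((a k + (-π (xp (k+1)) + c (k+1) - cI) : ℝ) : EReal) := by
          rw [h3, h4]
      _ ≤ (π (xp k) : EReal) + (A (xp k) (xp (k+1)) + w (xp (k+1))) :=
          add_le_add_right h2 _
      _ ≤ (π (xp k) : EReal) + flat A π w (xp k) := add_le_add_right h1 _
  have hHflat : Hflat A π w w = 0 := by
    refine le_antisymm (hflat_le_zero hπ hwmem) ?_
    unfold Hflat
    refine le_iInf fun W => le_iInf fun hW => ?_
    refine ereal_le_of_forall_real_lt _ _ (fun q hq => ?_)
    have hq0 : q < 0 := by exact_mod_cast hq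
    -- choose k with both: column in W and cI - c k ≤ -q
    have hev1 : ∀ᶠ k in atTop, (fun i => K A π i (xp k)) ∈ W := htend.eventually_mem hW
    have hev2 : ∀ᶠ k in atTop, cI - c k ≤ -q := by
      have h1 : Tendsto (fun k => cI - c k) atTop (𝓝 (cI - cI)) :=
        tendsto_const_nhds.sub hctend
      rw [sub_self] at h1
      have h2 : Set.Iic (-q) ∈ 𝓝 (0:ℝ) := Iic_mem_nhds (by linarith)
      exact h1.eventually_mem h2
    rcases (hev1.and hev2).exists with ⟨k, hk1, hk2⟩
    have h3 : ((q : ℝ) : EReal) ≤ (π (xp k) : EReal) + flat A π w (xp k) := by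
      refine le_trans ?_ (hflatlow k)
      apply EReal.coe_le_coe_iff.2
      linarith
    refine le_trans h3 ?_
    refine le_trans (le_iSup (fun _ : (fun i => K A π i (xp k)) ∈ W =>
      (π (xp k) : EReal) + flat A π w (xp k)) hk1) ?_
    exact le_iSup (fun j => ⨆ (_ : (fun i => K A π i j) ∈ W),
      ((π j : EReal) + flat A π w j)) (xp k)
  -- the combined bound
  have hwub : w i₀ ≤ ((-π i₀ : ℝ) : EReal) := martin_le_neg_pi hπ hwmem i₀
  have hwreal : w i₀ = (((w i₀).toReal : ℝ) : EReal) := by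
    refine (EReal.coe_toReal ?_ ?_).symm
    · intro h
      rw [h] at hwub
      exact absurd (lt_of_le_of_lt hwub (EReal.coe_lt_top _)) (lt_irrefl _)
    · intro h
      rw [h] at hwlb
      exact absurd hwlb (not_le.2 (EReal.bot_lt_coe _))
  set W0 : ℝ := (w i₀).toReal with hW0
  have hw3 : ξ i₀ ≤ mu A π ξ w + w i₀ + (ε : EReal) := by
    have hmain : ((r 0 - ε : ℝ) : EReal) ≤ mu A π ξ w + w i₀ := by
      refine ereal_le_of_forall_real_lt _ _ (fun cq hcq => ?_)
      set q : ℝ := r 0 - ε - cq with hqd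
      have hqpos : 0 < q := by
        have := EReal.coe_lt_coe_iff.1 hcq
        simp only [hqd]; linarith
      have hmu1 : ((cq - W0 : ℝ) : EReal) ≤ mu A π ξ w := by
        refine le_mu A π ξ w _ (fun W hW => ?_)
        have hev1 : ∀ᶠ k in atTop, (fun i => K A π i (xp k)) ∈ W := htend.eventually_mem hW
        have hev2 : ∀ᶠ k in atTop, K A π i₀ (xp k) < ((W0 + q : ℝ) : EReal) := by
          refine (htendi i₀).eventually_mem (IsOpen.mem_nhds isOpen_Iio ?_)
          rw [Set.mem_Iio, hwreal]
          exact_mod_cast (by linarith : W0 < W0 + q)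
        rcases (hev1.and hev2).exists with ⟨k, hk1, hk2⟩
        refine ⟨xp k, hk1, ?_⟩
        -- real bound:  cq - W0 ≤ π (xp k) + r k
        have hKk1 : ((Wr k - π (xp k) : ℝ) : EReal) ≤ K A π i₀ (xp k) := by
          unfold K
          rw [EReal.coe_sub]
          refine EReal.sub_le_sub ?_ le_rfl
          rw [← hpath k, ← hx0]
          exact pathWeight_le_star A xp k
        have hKk2 : (Wr k - π (xp k) : ℝ) < W0 + q := by
          exact_mod_cast lt_of_le_of_lt hKk1 hk2
        have h2 : (π (xp k) : EReal) + ξ (xp k) = ((π (xp k) + r k : ℝ) : EReal) := by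
          rw [hrcoe k, ← EReal.coe_add]
        rw [h2]
        apply EReal.coe_le_coe_iff.2
        have h3 := htel' k
        have h4 : cq = r 0 - ε - q := by simp only [hqd]; ring
        rw [h4]
        linarith
      calc ((cq : ℝ) : EReal) = ((cq - W0 : ℝ) : EReal) + ((W0 : ℝ) : EReal) := by
            rw [← EReal.coe_add]; norm_num
        _ ≤ mu A π ξ w + w i₀ := by
            rw [hwreal]
            exact add_le_add hmu1 le_rfl
    have h2 : ξ i₀ = ((r 0 : ℝ) : EReal) := by rw [← hx0]; exact hrcoe 0
    rw [h2]
    calc ((r 0 : ℝ) : EReal) = ((r 0 - ε : ℝ) : EReal) + (ε : EReal) := by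
          rw [← EReal.coe_add]; norm_num
      _ ≤ (mu A π ξ w + w i₀) + (ε : EReal) := add_le_add_left hmain _
  exact ⟨w, ⟨hwmem, hHflat⟩, hw3⟩
end MaxPlus
namespace MaxPlus
open Filter Topology
variable {S : Type*}

/-- `μ_u` is upper semicontinuous: sublevel sets are open. -/
lemma isOpen_mu_lt (A : S → S → EReal) (π : S → ℝ) (u : S → EReal) (c : EReal) :
    IsOpen {w : S → EReal | mu A π u w < c} := by
  refine isOpen_iff_forall_mem_open.2 fun w hw => ?_
  simp only [Set.mem_setOf_eq] at hw
  rcases iInf_lt_iff.1 hw with ⟨W, hW'⟩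
  rcases iInf_lt_iff.1 hW' with ⟨hW, hFW⟩
  rcases mem_nhds_iff.1 hW with ⟨O, hOW, hO, hwO⟩
  refine ⟨O, fun w' hw' => ?_, hO, hwO⟩
  simp only [Set.mem_setOf_eq]
  have hW2 : W ∈ 𝓝 w' := mem_nhds_iff.2 ⟨O, hOW, hO, hw'⟩
  exact lt_of_le_of_lt (mu_le_of_nhds hW2) hFW

lemma isClosed_le_coord (i : S) (c : EReal) : IsClosed {w : S → EReal | c ≤ w i} :=
  IsClosed.preimage (continuous_apply i) isClosed_Ici

lemma exists_inv_succ_lt {ε : ℝ} (hε : 0 < ε) : ∃ n : ℕ, ((n:ℝ)+1)⁻¹ < ε := by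
  rcases exists_nat_one_div_lt hε with ⟨n, hn⟩
  exact ⟨n, by rwa [one_div] at hn⟩

end MaxPlus
namespace MaxPlus
open Filter Topology
variable {S : Type*}

lemma backward {A : S → S → EReal} (hA : ∀ i j, A i j ≠ ⊤) {π : S → ℝ}
    (hπ : LeftSuperharmonic A π) {ξ : S → EReal}
    (hmem : ξ ∈ Hset A π) (hnb : ξ ≠ (fun _ => (⊥ : EReal)))
    (hext : ∀ u v, u ∈ Hset A π → v ∈ Hset A π →
      ξ = (fun i => u i ⊔ v i) → ξ = u ∨ ξ = v)
    (hnorm : Normalised π ξ) : ξ ∈ martinMin A π := by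
  classical
  have hsh : ∀ i j, A i j + ξ j ≤ ξ i := fun i j =>
    le_trans (le_iSup (fun j => A i j + ξ j) j) (le_of_eq (hmem.2.1 i))
  set η : ℕ → ℝ := fun n => ((n:ℝ)+1)⁻¹ with hη
  have hηpos : ∀ n, 0 < η n := fun n => by positivity
  set Tt := {i : S // ξ i ≠ ⊥} × ℕ with hTt
  have happrox : ∀ t : Tt, ∃ w ∈ martinMin A π,
      ξ t.1.1 ≤ mu A π ξ w + w t.1.1 + ((η t.2 : ℝ) : EReal) := fun t =>
    exists_martinMin_approx hA hπ hmem hnorm t.1.1 t.1.2 (hηpos t.2)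
  set wf : Tt → (S → EReal) := fun t => (happrox t).choose with hwf
  have hwmin : ∀ t, wf t ∈ martinMin A π := fun t => (happrox t).choose_spec.1
  have hw3 : ∀ t, ξ t.1.1 ≤ mu A π ξ (wf t) + wf t t.1.1 + ((η t.2 : ℝ) : EReal) :=
    fun t => (happrox t).choose_spec.2
  have hmu_le : ∀ t, mu A π ξ (wf t) ≤ 0 := fun t =>
    le_trans (mu_le_sup A π ξ (wf t)) (le_of_eq hnorm)
  have hmu_ne_bot : ∀ t, mu A π ξ (wf t) ≠ ⊥ := by
    intro t h
    have := hw3 t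
    rw [h, EReal.bot_add, EReal.bot_add] at this
    exact t.1.2 (le_bot_iff.1 this)
  set m : Tt → ℝ := fun t => (mu A π ξ (wf t)).toReal with hm
  have hmcoe : ∀ t, ((m t : ℝ) : EReal) = mu A π ξ (wf t) := fun t =>
    EReal.coe_toReal (ne_top_of_le_ne_top (by simp) (hmu_le t)) (hmu_ne_bot t)
  have hm_le0 : ∀ t, ((m t : ℝ) : EReal) ≤ 0 := fun t => (hmcoe t).le.trans (hmu_le t)
  set uf : Tt → S → EReal := fun t i => ((m t : ℝ) : EReal) + wf t i with huf
  have hu_mem : ∀ t, uf t ∈ Hset A π := fun t =>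
    hset_const_add (martinMin_mem_Hset hπ (hwmin t)) (m t)
  have hu_le : ∀ t i, uf t i ≤ ξ i := by
    intro t i
    have h1 := mu_add_le_of_superharm (π := π) hsh (wf t) i
    rw [← hmcoe t] at h1
    exact h1
  have hu_base : ∀ t, ξ t.1.1 - ((η t.2 : ℝ) : EReal) ≤ uf t t.1.1 := by
    intro t
    rw [ereal_sub_le_iff]
    have := hw3 t
    rwa [← hmcoe t] at this
  have hu_pi : ∀ t j, (π j : EReal) + uf t j ≤ ((m t : ℝ) : EReal) := by
    intro t j
    have h1 : (π j : EReal) + uf t j = ((m t : ℝ) : EReal) + ((π j : EReal) + wf t j) := by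
      rw [huf]
      simp only []
      rw [← add_assoc, add_comm ((π j : EReal)) (((m t : ℝ) : EReal)), add_assoc]
    rw [h1]
    calc ((m t : ℝ) : EReal) + ((π j : EReal) + wf t j)
        ≤ ((m t : ℝ) : EReal) + 0 := add_le_add_right (martin_pi_add_le hπ (hwmin t).1 j) _
      _ = ((m t : ℝ) : EReal) := add_zero _
  have husup : ∀ P : Tt → Prop, (fun i => ⨆ t, ⨆ _ : P t, uf t i) ∈ Hset A π := by
    intro P
    have h1 : (fun i => ⨆ t, ⨆ _ : P t, uf t i)
        = fun i => ⨆ t : {t // P t}, uf t.1 i := by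
      funext i
      exact iSup_subtype'
    rw [h1]
    exact hset_iSup (fun t : {t // P t} => uf t.1) (fun t => hu_mem t.1)
      (fun t i => hu_le t.1 i) hmem.1 hmem.2.2
  -- the closed constraint sets
  set Cs : Tt ⊕ ℕ → Set (S → EReal) := fun l =>
    Sum.rec (fun t => {w : S → EReal | ξ t.1.1 - ((η t.2 : ℝ) : EReal) ≤ w t.1.1})
      (fun n => {w : S → EReal | ((-(η n) : ℝ) : EReal) ≤ mu A π ξ w}) l with hCs
  have hCclosed : ∀ l, IsClosed (Cs l) := by
    rintro (t | n)
    · exact isClosed_le_coord t.1.1 _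
    · have h1 : Cs (Sum.inr n) = {w : S → EReal | mu A π ξ w < ((-(η n) : ℝ) : EReal)}ᶜ := by
        ext w
        simp [hCs, not_lt]
      rw [h1]
      exact (isOpen_mu_lt A π ξ _).isClosed_compl
  set Good : Finset (Tt ⊕ ℕ) → Set Tt := fun F => {s | ∀ l ∈ F, wf s ∈ Cs l} with hGood
  -- the representation
  have hrep : ∀ F : Finset (Tt ⊕ ℕ), ξ = fun i => ⨆ s, ⨆ _ : s ∈ Good F, uf s i := by
    intro F
    induction F using Finset.induction_on with
    | empty =>
      funext i
      refine le_antisymm ?_ (iSup_le fun s => iSup_le fun _ => hu_le s i)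
      refine ereal_le_of_forall_real_lt _ _ (fun c hc => ?_)
      have hne : ξ i ≠ ⊥ := fun h => by rw [h] at hc; exact (not_lt_bot hc).elim
      have hρ : ξ i = (((ξ i).toReal : ℝ) : EReal) := (EReal.coe_toReal (hmem.1 i) hne).symm
      set ρ : ℝ := (ξ i).toReal with hρd
      have hcρ : c < ρ := by rw [hρ] at hc; exact_mod_cast hc
      rcases exists_inv_succ_lt (show (0:ℝ) < ρ - c by linarith) with ⟨n, hn⟩
      set s : Tt := (⟨i, hne⟩, n) with hs
      have hsmem : s ∈ Good (∅ : Finset (Tt ⊕ ℕ)) := fun l hl => absurd hl (by simp)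
      have h1 : (c : EReal) ≤ uf s i := by
        refine le_trans ?_ (hu_base s)
        rw [hρ, ← EReal.coe_sub]
        apply EReal.coe_le_coe_iff.2
        have : η n = ((n:ℝ)+1)⁻¹ := rfl
        rw [this]
        linarith
      exact le_trans h1 (le_trans (le_iSup (fun _ : s ∈ Good ∅ => uf s i) hsmem)
        (le_iSup (fun s => ⨆ _ : s ∈ Good (∅ : Finset (Tt ⊕ ℕ)), uf s i) s))
    | insert l F hl ih =>
      have hsplit : ξ = fun i => (⨆ s, ⨆ _ : s ∈ Good (insert l F), uf s i)
          ⊔ (⨆ s, ⨆ _ : (s ∈ Good F ∧ wf s ∉ Cs l), uf s i) := by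
        funext i
        refine le_antisymm ?_ ?_
        · calc ξ i = ⨆ s, ⨆ _ : s ∈ Good F, uf s i := congrFun ih i
            _ ≤ _ := ?_
          refine iSup_le fun s => iSup_le fun hs => ?_
          by_cases hc : wf s ∈ Cs l
          · have hmem' : s ∈ Good (insert l F) := by
              intro l' hl'
              rcases Finset.mem_insert.1 hl' with h | h
              · rw [h]; exact hc
              · exact hs l' h
            exact le_trans (le_trans (le_iSup (fun _ : s ∈ Good (insert l F) => uf s i) hmem')
              (le_iSup (fun s => ⨆ _ : s ∈ Good (insert l F), uf s i) s)) le_sup_left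
          · exact le_trans (le_trans (le_iSup (fun _ : (s ∈ Good F ∧ wf s ∉ Cs l) => uf s i)
              ⟨hs, hc⟩) (le_iSup (fun s => ⨆ _ : (s ∈ Good F ∧ wf s ∉ Cs l), uf s i) s))
              le_sup_right
        · exact sup_le (iSup_le fun s => iSup_le fun _ => hu_le s i)
            (iSup_le fun s => iSup_le fun _ => hu_le s i)
      rcases hext _ _ (husup (· ∈ Good (insert l F))) (husup (fun s => s ∈ Good F ∧ wf s ∉ Cs l))
          hsplit with h | h
      · exact h
      · -- contradiction
        exfalso
        rcases l with t | n
        · -- coordinate t.1.1 is strictly missed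
          have hublt : ∀ s, (s ∈ Good F ∧ wf s ∉ Cs (Sum.inl t)) →
              uf s t.1.1 ≤ ξ t.1.1 - ((η t.2 : ℝ) : EReal) := by
            rintro s ⟨-, hsc⟩
            have h1 : wf s t.1.1 < ξ t.1.1 - ((η t.2 : ℝ) : EReal) := by
              simpa [hCs, not_le] using hsc
            refine le_trans ?_ h1.le
            calc uf s t.1.1 = ((m s : ℝ) : EReal) + wf s t.1.1 := rfl
              _ ≤ 0 + wf s t.1.1 := add_le_add_left (hm_le0 s) _
              _ = wf s t.1.1 := zero_add _
          have h2 : ξ t.1.1 ≤ ξ t.1.1 - ((η t.2 : ℝ) : EReal) := by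
            refine le_trans (le_of_eq (congrFun h t.1.1)) ?_
            exact iSup_le fun s => iSup_le fun hs => hublt s hs
          have hρ : ξ t.1.1 = (((ξ t.1.1).toReal : ℝ) : EReal) :=
            (EReal.coe_toReal (hmem.1 t.1.1) t.1.2).symm
          rw [hρ, ← EReal.coe_sub] at h2
          have h3 := EReal.coe_le_coe_iff.1 h2
          have := hηpos t.2
          linarith
        · -- all μ's are below -η n
          have hall : ∀ s, (s ∈ Good F ∧ wf s ∉ Cs (Sum.inr n)) →
              ∀ j, (π j : EReal) + uf s j ≤ ((-(η n) : ℝ) : EReal) := by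
            rintro s ⟨-, hsc⟩ j
            have h1 : mu A π ξ (wf s) < ((-(η n) : ℝ) : EReal) := by
              simpa [hCs, not_le] using hsc
            refine le_trans (hu_pi s j) ?_
            rw [hmcoe s]
            exact h1.le
          have h2 : ((-(η n) : ℝ) : EReal) < ⨆ j, ((π j : EReal) + ξ j) := by
            rw [hnorm]
            exact_mod_cast neg_neg_iff_pos.2 (hηpos n)
          rcases lt_iSup_iff.1 h2 with ⟨j, hj⟩
          have h3 : (π j : EReal) + ξ j ≤ ((-(η n) : ℝ) : EReal) := by
            refine le_trans (le_of_eq (congr_arg ((π j : EReal) + ·) (congrFun h j))) ?_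
            rw [ereal_add_iSup _ _]
            refine iSup_le fun s => ?_
            rw [ereal_add_iSup _ _]
            exact iSup_le fun hs => hall s hs j
          exact absurd h3 (not_le.2 hj)
  -- nonemptiness of the good sets
  have hGoodne : ∀ F : Finset (Tt ⊕ ℕ), (Good F).Nonempty := by
    intro F
    rcases Set.eq_empty_or_nonempty (Good F) with hemp | hne
    · exfalso
      apply hnb
      have h1 := hrep F
      rw [hemp] at h1
      refine h1.trans ?_
      funext i
      simp
    · exact hne
  -- the compact intersection
  set Ks : Finset (Tt ⊕ ℕ) → Set (S → EReal) := fun F =>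
    martin A π ∩ ⋂ l ∈ F, Cs l with hKs
  have hKclosed : ∀ F, IsClosed (Ks F) := fun F =>
    IsClosed.inter isClosed_closure (isClosed_biInter fun l _ => hCclosed l)
  have hKne : ∀ F, (Ks F).Nonempty := by
    intro F
    rcases hGoodne F with ⟨s, hs⟩
    exact ⟨wf s, (hwmin s).1, Set.mem_iInter₂.2 fun l hl => hs l hl⟩
  have hKdir : Directed (fun x1 x2 => x1 ⊇ x2) Ks := by
    intro F G
    refine ⟨F ∪ G, ?_, ?_⟩
    · refine Set.inter_subset_inter le_rfl ?_
      intro w hw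
      refine Set.mem_iInter₂.2 fun l hl => ?_
      exact Set.mem_iInter₂.1 hw l (Finset.mem_union_left G hl)
    · refine Set.inter_subset_inter le_rfl ?_
      intro w hw
      refine Set.mem_iInter₂.2 fun l hl => ?_
      exact Set.mem_iInter₂.1 hw l (Finset.mem_union_right F hl)
  have hKcpt : ∀ F, IsCompact (Ks F) := fun F => (hKclosed F).isCompact
  have hItne : (⋂ F, Ks F).Nonempty :=
    IsCompact.nonempty_iInter_of_directed_nonempty_isCompact_isClosed Ks hKdir hKne hKcpt hKclosed
  rcases hItne with ⟨ws, hws⟩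
  have hwsM : ws ∈ martin A π := (Set.mem_iInter.1 hws ∅).1
  have hwsC : ∀ l, ws ∈ Cs l := by
    intro l
    have h1 := (Set.mem_iInter.1 hws {l}).2
    exact Set.mem_iInter₂.1 h1 l (Finset.mem_singleton_self l)
  -- μ_ξ(w*) = 0
  have hmu0 : mu A π ξ ws = 0 := by
    refine le_antisymm (le_trans (mu_le_sup A π ξ ws) (le_of_eq hnorm)) ?_
    refine ereal_le_of_forall_real_lt _ _ (fun c hc => ?_)
    have hc0 : c < 0 := by exact_mod_cast hc
    rcases exists_inv_succ_lt (show (0:ℝ) < -c by linarith) with ⟨n, hn⟩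
    have h1 := hwsC (Sum.inr n)
    simp only [hCs, Set.mem_setOf_eq] at h1
    refine le_trans ?_ h1
    apply EReal.coe_le_coe_iff.2
    have : η n = ((n:ℝ)+1)⁻¹ := rfl
    rw [this]
    linarith
  -- ξ ≤ w*
  have hle : ∀ i, ξ i ≤ ws i := by
    intro i
    refine ereal_le_of_forall_real_lt _ _ (fun c hc => ?_)
    have hne : ξ i ≠ ⊥ := fun hb => by rw [hb] at hc; exact (not_lt_bot hc).elim
    have hρ : ξ i = (((ξ i).toReal : ℝ) : EReal) := (EReal.coe_toReal (hmem.1 i) hne).symm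
    set ρ : ℝ := (ξ i).toReal with hρd
    have hcρ : c < ρ := by rw [hρ] at hc; exact_mod_cast hc
    rcases exists_inv_succ_lt (show (0:ℝ) < ρ - c by linarith) with ⟨n, hn⟩
    have h1 := hwsC (Sum.inl (⟨i, hne⟩, n))
    simp only [hCs, Set.mem_setOf_eq] at h1
    refine le_trans ?_ h1
    rw [hρ, ← EReal.coe_sub]
    apply EReal.coe_le_coe_iff.2
    have : η n = ((n:ℝ)+1)⁻¹ := rfl
    rw [this]
    linarith
  -- w* ≤ ξ
  have hge : ∀ i, ws i ≤ ξ i := by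
    intro i
    have h1 := mu_add_le_of_superharm (π := π) hsh ws i
    rwa [hmu0, zero_add] at h1
  have hfe : ξ = ws := funext fun i => le_antisymm (hle i) (hge i)
  have hmm : ξ ∈ martin A π := by rw [← hfe] at hwsM; exact hwsM
  have hflat_eq : flat A π ξ = ξ := by
    funext j
    refine le_antisymm (flat_le_self hπ hmm j) ?_
    refine le_trans (le_of_eq (hmem.2.1 j).symm) ?_
    exact iSup_le fun l => single_add_le_flat A π ξ j l
  refine ⟨hmm, ?_⟩
  show Hflat A π ξ ξ = 0
  unfold Hflat
  rw [hflat_eq]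
  rw [← hfe] at hmu0
  exact hmu0

end MaxPlus
namespace MaxPlus

/-- a vector `ξ` is a normalised extremal generator of `ℋ` iff `ξ ∈ ℳᵐ`. -/
theorem extremalGen_Hset_iff {S : Type*} (A : S → S → EReal)
    (hA : ∀ i j, A i j ≠ ⊤) (π : S → ℝ) (hπ : LeftSuperharmonic A π)
    (ξ : S → EReal) :
    (ExtremalGen (Hset A π) ξ ∧ Normalised π ξ) ↔ ξ ∈ martinMin A π := by
  constructor
  · rintro ⟨⟨hmem, hnb, hext⟩, hnorm⟩
    exact backward hA hπ hmem hnb hext hnorm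
  · intro hw
    exact martinMin_forward hπ hw

end MaxPlus
end
end

section
/- Assume ζ(x) > −∞ for all x ∈ ℝ^n. Then a function u : ℝ^n → ℝ ∪ {−∞}, not identically −∞, is an eigenvector of the Lax-Oleinik semigroup (T^t)_{t>0} with eigenvalue −L(0) if and only if u(y) − ζ(y − x) ≤ u(x) for all x, y ∈ ℝ^n. -/
open Filter Topology

noncomputable section

namespace LaxOleinik

/-- The Lax-Oleinik operator `(T^t u)(x) = sup_y (−t·L((y−x)/t) + u(y))`. -/
def laxOp {n : ℕ} (L : (Fin n → ℝ) → EReal) (t : ℝ) (u : (Fin n → ℝ) → EReal)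
    (x : Fin n → ℝ) : EReal :=
  ⨆ y : Fin n → ℝ, (((-t : ℝ) : EReal) * L (t⁻¹ • (y - x)) + u y)

/-- Convexity for an `EReal`-valued function. -/
def ConvexFn {n : ℕ} (L : (Fin n → ℝ) → EReal) : Prop :=
  ∀ x y : Fin n → ℝ, ∀ a b : ℝ, 0 ≤ a → 0 ≤ b → a + b = 1 →
    L (a • x + b • y) ≤ (a : EReal) * L x + (b : EReal) * L y

/-- The one-sided directional derivative of `L` at the origin in the direction `x`:
`ζ(x) = inf_{t>0} (L(tx) − L(0))/t` (which equals `lim_{t→0⁺}` by convexity). -/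
def zeta {n : ℕ} (L : (Fin n → ℝ) → EReal) (x : Fin n → ℝ) : EReal :=
  ⨅ (t : ℝ) (_ : 0 < t), ((t⁻¹ : ℝ) : EReal) * (L (t • x) - L 0)

private lemma shift_lemma (p q : ℝ) {x y : EReal} (h : (p : EReal) + x ≤ y + (q : EReal)) :
    x ≤ y + ((q - p : ℝ) : EReal) := by
  have h2 := add_le_add_left h ((-p : ℝ) : EReal)
  have e1 : ((p : EReal) + x) + ((-p : ℝ) : EReal) = x := by
    rw [add_comm (p : EReal) x, add_assoc, ← EReal.coe_add]
    norm_num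
  have e2 : (y + (q : EReal)) + ((-p : ℝ) : EReal) = y + ((q - p : ℝ) : EReal) := by
    rw [add_assoc, ← EReal.coe_add]
    norm_num [sub_eq_add_neg]
  rw [e1, e2] at h2
  exact h2

/-- if `ζ > −∞` everywhere, then a function `u : ℝⁿ → ℝ ∪ {−∞}`,
not identically `−∞`, is an eigenvector of the Lax-Oleinik semigroup `(T^t)_{t>0}`
with eigenvalue `−L(0)` iff `u(y) − ζ(y − x) ≤ u(x)` for all `x, y`. -/
theorem eigenvector_negL0_iff {n : ℕ} (hn : 1 ≤ n)
    (L : (Fin n → ℝ) → EReal) (hLbot : ∀ x, L x ≠ ⊥) (hL0 : L 0 ≠ ⊤)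
    (hconv : ConvexFn L) (hlsc : LowerSemicontinuous L)
    (hbdd : ∃ c : ℝ, ∀ x, (c : EReal) ≤ L x)
    (hzeta : ∀ x, zeta L x ≠ ⊥)
    (u : (Fin n → ℝ) → EReal) (hutop : ∀ x, u x ≠ ⊤)
    (hune : u ≠ fun _ => (⊥ : EReal)) :
    (∀ t : ℝ, 0 < t → ∀ x, laxOp L t u x = u x + (t : EReal) * (-(L 0))) ↔
      (∀ x y, u y - zeta L (y - x) ≤ u x) := by
  obtain ⟨l, hl⟩ : ∃ l : ℝ, L 0 = (l : EReal) :=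
    ⟨(L 0).toReal, (EReal.coe_toReal hL0 (hLbot 0)).symm⟩
  constructor
  · intro h x y
    have claim : ∀ t : ℝ, 0 < t →
        u y - ((t⁻¹ : ℝ) : EReal) * (L (t • (y - x)) - L 0) ≤ u x := by
      intro t ht
      have hterm : ((-t⁻¹ : ℝ) : EReal) * L ((t⁻¹)⁻¹ • (y - x)) + u y ≤
          u x + ((t⁻¹ : ℝ) : EReal) * (-(L 0)) := by
        rw [← h t⁻¹ (by positivity) x]
        simp only [laxOp]
        exact le_iSup (fun y => ((-t⁻¹ : ℝ) : EReal) * L ((t⁻¹)⁻¹ • (y - x)) + u y) y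
      rw [inv_inv] at hterm
      rcases eq_or_ne (L (t • (y - x))) ⊤ with hA | hA
      · rw [hA, hl, EReal.top_sub_coe, EReal.coe_mul_top_of_pos (by positivity),
          EReal.sub_top]
        exact bot_le
      · obtain ⟨a, ha⟩ : ∃ a : ℝ, L (t • (y - x)) = (a : EReal) :=
          ⟨_, (EReal.coe_toReal hA (hLbot _)).symm⟩
        rw [ha, hl] at hterm ⊢
        rw [← EReal.coe_neg, ← EReal.coe_mul, ← EReal.coe_mul] at hterm
        rw [← EReal.coe_sub, ← EReal.coe_mul]
        refine (EReal.sub_le_iff_le_add (.inl (EReal.coe_ne_bot _))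
          (.inl (EReal.coe_ne_top _))).2 ?_
        have e : t⁻¹ * (a - l) = t⁻¹ * -l - -t⁻¹ * a := by ring
        rw [e]
        exact shift_lemma _ _ hterm
    rcases eq_or_ne (u y) ⊥ with hy | hy
    · rw [hy, EReal.bot_sub]; exact bot_le
    obtain ⟨α, hα⟩ : ∃ a : ℝ, u y = (a : EReal) := ⟨_, (EReal.coe_toReal (hutop y) hy).symm⟩
    rcases eq_or_ne (zeta L (y - x)) ⊤ with hzt | hzt
    · rw [hzt, EReal.sub_top]; exact bot_le
    obtain ⟨z, hzv⟩ : ∃ z : ℝ, zeta L (y - x) = (z : EReal) :=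
      ⟨_, (EReal.coe_toReal hzt (hzeta _)).symm⟩
    rcases eq_or_ne (u x) ⊥ with hx | hx
    · exfalso
      have htop : ∀ t : ℝ, 0 < t →
          ((t⁻¹ : ℝ) : EReal) * (L (t • (y - x)) - L 0) = ⊤ := by
        intro t ht
        rcases eq_or_ne (L (t • (y - x))) ⊤ with hA | hA
        · rw [hA, hl, EReal.top_sub_coe, EReal.coe_mul_top_of_pos (by positivity)]
        · exfalso
          obtain ⟨a, ha⟩ : ∃ a : ℝ, L (t • (y - x)) = (a : EReal) :=
            ⟨_, (EReal.coe_toReal hA (hLbot _)).symm⟩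
          have hc := claim t ht
          rw [ha, hl, ← EReal.coe_sub, ← EReal.coe_mul, hα, ← EReal.coe_sub, hx] at hc
          exact (EReal.coe_ne_bot _) (le_bot_iff.1 hc)
      have : zeta L (y - x) = ⊤ := by
        refine top_le_iff.1 ?_
        simp only [zeta]
        exact le_iInf fun t => le_iInf fun ht => le_of_eq (htop t ht).symm
      exact hzt this
    obtain ⟨b, hb⟩ : ∃ b : ℝ, u x = (b : EReal) := ⟨_, (EReal.coe_toReal (hutop x) hx).symm⟩
    have key : ((α - b : ℝ) : EReal) ≤ zeta L (y - x) := by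
      simp only [zeta]
      refine le_iInf fun t => le_iInf fun ht => ?_
      rcases eq_or_ne (L (t • (y - x))) ⊤ with hA | hA
      · rw [hA, hl, EReal.top_sub_coe, EReal.coe_mul_top_of_pos (by positivity)]
        exact le_top
      · obtain ⟨a, ha⟩ : ∃ a : ℝ, L (t • (y - x)) = (a : EReal) :=
          ⟨_, (EReal.coe_toReal hA (hLbot _)).symm⟩
        have hc := claim t ht
        rw [ha, hl, ← EReal.coe_sub, ← EReal.coe_mul, hα, ← EReal.coe_sub, hb,
          EReal.coe_le_coe_iff] at hc
        rw [ha, hl, ← EReal.coe_sub, ← EReal.coe_mul, EReal.coe_le_coe_iff]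
        linarith
    rw [hzv, EReal.coe_le_coe_iff] at key
    rw [hα, hzv, hb, ← EReal.coe_sub, EReal.coe_le_coe_iff]
    linarith
  · intro h t ht x
    refine le_antisymm ?_ ?_
    · simp only [laxOp]
      refine iSup_le fun y => ?_
      rcases eq_or_ne (L (t⁻¹ • (y - x))) ⊤ with hA | hA
      · have hneg : ((-t : ℝ) : EReal) < 0 := by
          rw [← EReal.coe_zero, EReal.coe_lt_coe_iff]; linarith
        rw [hA, EReal.mul_top_of_neg hneg, EReal.bot_add]
        exact bot_le
      obtain ⟨a, ha⟩ : ∃ a : ℝ, L (t⁻¹ • (y - x)) = (a : EReal) :=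
        ⟨_, (EReal.coe_toReal hA (hLbot _)).symm⟩
      have hz1 : zeta L (y - x) ≤ ((t * (a - l) : ℝ) : EReal) := by
        have h0 : zeta L (y - x) ≤ (((t⁻¹)⁻¹ : ℝ) : EReal) * (L (t⁻¹ • (y - x)) - L 0) := by
          simp only [zeta]
          exact iInf₂_le t⁻¹ (by positivity)
        rwa [inv_inv, ha, hl, ← EReal.coe_sub, ← EReal.coe_mul] at h0
      obtain ⟨z, hzv⟩ : ∃ z : ℝ, zeta L (y - x) = (z : EReal) :=
        ⟨_, (EReal.coe_toReal (hz1.trans_lt (EReal.coe_lt_top _)).ne (hzeta _)).symm⟩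
      rw [hzv, EReal.coe_le_coe_iff] at hz1
      have huy : u y ≤ u x + (z : EReal) := by
        have hh := h x y
        rw [hzv] at hh
        exact (EReal.sub_le_iff_le_add (.inl (EReal.coe_ne_bot _))
          (.inl (EReal.coe_ne_top _))).1 hh
      rw [ha, hl, ← EReal.coe_neg, ← EReal.coe_mul, ← EReal.coe_mul]
      calc ((-t * a : ℝ) : EReal) + u y ≤ ((-t * a : ℝ) : EReal) + (u x + (z : EReal)) :=
            add_le_add_right huy _
        _ = u x + ((-t * a + z : ℝ) : EReal) := by
            rw [← add_assoc, add_comm ((-t * a : ℝ) : EReal) (u x), add_assoc,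
              ← EReal.coe_add]
        _ ≤ u x + ((t * -l : ℝ) : EReal) := by
            refine add_le_add_right (EReal.coe_le_coe_iff.2 ?_) _
            nlinarith [hz1]
    · have hterm : ((-t : ℝ) : EReal) * L (t⁻¹ • (x - x)) + u x ≤ laxOp L t u x := by
        simp only [laxOp]
        exact le_iSup (fun y => ((-t : ℝ) : EReal) * L (t⁻¹ • (y - x)) + u y) x
      rw [sub_self, smul_zero, hl, ← EReal.coe_mul] at hterm
      have e : u x + (t : EReal) * (-(L 0)) = ((-t * l : ℝ) : EReal) + u x := by
        have er : (t * -l : ℝ) = -t * l := by ring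
        rw [hl, ← EReal.coe_neg, ← EReal.coe_mul, er, add_comm]
      rw [e]
      exact hterm

end LaxOleinik
end
end

section
/- Let ‖·‖ be a polyhedral norm on ℝ^n with dual unit ball B′ having finite set of extreme points (x′_i)_{i∈I}, so that ‖x‖ = max_{i∈I} ⟨x′_i, x⟩. Then the Martin boundary ℳ ∖ 𝒦 of the kernel (x, y) ↦ −‖y − x‖ with basepoint 0 is exactly the set of functions of the form x ↦ min_{j∈J} ⟨x′_j, x − X⟩ + max_{j∈J} ⟨x′_j, X⟩, where X ranges over ℝ^n and (x′_j)_{j∈J} ranges over the sets of extreme points of proper faces of B′. Moreover, every point of the Martin boundary is a Busemann point of (ℝ^n, ‖·‖). -/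
open Filter Topology

noncomputable section

namespace PolyNorm

/-- The standard pairing `⟨x, y⟩ = ∑ k, x k * y k` on `ℝⁿ`. -/
def dot {n : ℕ} (x y : Fin n → ℝ) : ℝ := ∑ k, x k * y k

/-- `N` is a norm on `ℝⁿ`. -/
def IsNorm {n : ℕ} (N : (Fin n → ℝ) → ℝ) : Prop :=
  (∀ x, (N x = 0 ↔ x = 0)) ∧ (∀ (a : ℝ) (x : Fin n → ℝ), N (a • x) = |a| * N x) ∧
    ∀ x y, N (x + y) ≤ N x + N y

/-- The Martin kernel column `K_X(x) = N(X) − N(X − x)` of the kernel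
`(x,y) ↦ −N(y − x)` with basepoint `0`. -/
def polyK {n : ℕ} (N : (Fin n → ℝ) → ℝ) (X : Fin n → ℝ) : (Fin n → ℝ) → ℝ :=
  fun x => N X - N (X - x)

/-- The set `𝒦` of Martin kernel columns. -/
def polyKset {n : ℕ} (N : (Fin n → ℝ) → ℝ) : Set ((Fin n → ℝ) → ℝ) :=
  Set.range (polyK N)

/-- The Martin space `ℳ`: the closure of `𝒦` in the product topology. -/
def polyMartin {n : ℕ} (N : (Fin n → ℝ) → ℝ) : Set ((Fin n → ℝ) → ℝ) :=
  closure (polyKset N)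

/-- The dual unit ball `B′` of the norm `N`. -/
def dualBall {n : ℕ} (N : (Fin n → ℝ) → ℝ) : Set (Fin n → ℝ) :=
  {y | ∀ x, dot y x ≤ N x}

/-- `F` is a proper face of `B`: the intersection of `B` with a supporting half-space,
distinct from `B`. -/
def IsProperFace {n : ℕ} (B F : Set (Fin n → ℝ)) : Prop :=
  ∃ (v : Fin n → ℝ) (c : ℝ), (∀ y ∈ B, dot y v ≤ c) ∧ (∃ y ∈ B, dot y v = c) ∧
    F = {y ∈ B | dot y v = c} ∧ F ≠ B

/-- A Rieffel almost-geodesic in the normed space `(ℝⁿ, N)`. -/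
def IsRieffelAG {n : ℕ} (N : (Fin n → ℝ) → ℝ) (T : Set ℝ) (γ : ℝ → Fin n → ℝ) : Prop :=
  (0 : ℝ) ∈ T ∧ (∀ t ∈ T, 0 ≤ t) ∧ ¬ BddAbove T ∧
    ∀ ε : ℝ, 0 < ε → ∃ M : ℝ, ∀ s ∈ T, M ≤ s → ∀ t ∈ T, s ≤ t →
      |N (γ t - γ s) + N (γ s - γ 0) - t| < ε

/-- A Busemann point of `(ℝⁿ, N)`: a pointwise limit of `x ↦ N(γ(t)) − N(γ(t) − x)`
along a Rieffel almost-geodesic `γ`. -/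
def IsBusemannPt {n : ℕ} (N : (Fin n → ℝ) → ℝ) (w : (Fin n → ℝ) → ℝ) : Prop :=
  ∃ (T : Set ℝ) (γ : ℝ → Fin n → ℝ), IsRieffelAG N T γ ∧
    ∀ x, Tendsto (fun t : T => N (γ t) - N (γ t - x)) atTop (𝓝 (w x))

set_option linter.unusedSectionVars false
set_option maxHeartbeats 1000000


section help
variable {I : Type*}

lemma sub_sup' (s : Finset I) (h : s.Nonempty) (c : ℝ) (f : I → ℝ) :
    c - s.sup' h f = s.inf' h (fun i => c - f i) := by
  apply le_antisymm
  · exact Finset.le_inf' h _ fun i hi => by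
      have := Finset.le_sup' f hi
      linarith
  · obtain ⟨i₀, hi₀, he⟩ := Finset.exists_mem_eq_sup' h f
    calc s.inf' h (fun i => c - f i) ≤ c - f i₀ := Finset.inf'_le _ hi₀
    _ = c - s.sup' h f := by rw [he]

lemma sub_inf' (s : Finset I) (h : s.Nonempty) (c : ℝ) (f : I → ℝ) :
    c - s.inf' h f = s.sup' h (fun i => c - f i) := by
  have := sub_sup' s h c (fun i => c - f i)
  simp only [sub_sub_cancel] at this
  rw [← this]; ring

/-- stability of inf' under perturbation -/
lemma abs_inf'_sub_inf'_le (s : Finset I) (h : s.Nonempty) (f g : I → ℝ) :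
    |s.inf' h f - s.inf' h g| ≤ s.sup' h (fun i => |f i - g i|) := by
  rw [abs_le]
  constructor
  · obtain ⟨i₀, hi₀, he⟩ := Finset.exists_mem_eq_inf' h f
    have h1 : s.inf' h g ≤ g i₀ := Finset.inf'_le _ hi₀
    have h2 : |f i₀ - g i₀| ≤ s.sup' h (fun i => |f i - g i|) :=
      Finset.le_sup' (fun i => |f i - g i|) hi₀
    have h3 : g i₀ - f i₀ ≤ |f i₀ - g i₀| := by rw [abs_sub_comm]; exact le_abs_self _
    rw [he]; linarith
  · obtain ⟨i₀, hi₀, he⟩ := Finset.exists_mem_eq_inf' h g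
    have h1 : s.inf' h f ≤ f i₀ := Finset.inf'_le _ hi₀
    have h2 : |f i₀ - g i₀| ≤ s.sup' h (fun i => |f i - g i|) :=
      Finset.le_sup' (fun i => |f i - g i|) hi₀
    have h3 : f i₀ - g i₀ ≤ |f i₀ - g i₀| := le_abs_self _
    rw [he]; linarith

end help








section dotlem
variable {n : ℕ}
lemma dot_add_right (a x y : Fin n → ℝ) : dot a (x + y) = dot a x + dot a y := by
  simp [dot, mul_add, Finset.sum_add_distrib]
lemma dot_sub_right (a x y : Fin n → ℝ) : dot a (x - y) = dot a x - dot a y := by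
  simp [dot, mul_sub, Finset.sum_sub_distrib]
lemma dot_smul_right (a : Fin n → ℝ) (t : ℝ) (x : Fin n → ℝ) : dot a (t • x) = t * dot a x := by
  simp [dot, Finset.mul_sum]; ring_nf; simp [mul_comm, mul_left_comm]
lemma dot_neg_left (a x : Fin n → ℝ) : dot (-a) x = - dot a x := by simp [dot]
lemma dot_neg_right (a x : Fin n → ℝ) : dot a (-x) = - dot a x := by simp [dot]
lemma dot_zero_right (a : Fin n → ℝ) : dot a 0 = 0 := by simp [dot]
lemma dot_sub_left (a b x : Fin n → ℝ) : dot (a - b) x = dot a x - dot b x := by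
  simp [dot, sub_mul, Finset.sum_sub_distrib]
lemma continuous_dot_right (a : Fin n → ℝ) : Continuous fun x => dot a x := by
  unfold dot
  exact continuous_finset_sum _ fun k _ => (continuous_const.mul (continuous_apply k))
end dotlem

set_option linter.unusedSectionVars false
section normlem
variable {n : ℕ} {I : Type*} [Fintype I] [Nonempty I]
  {N : (Fin n → ℝ) → ℝ} {x' : I → Fin n → ℝ}

lemma N_zero (hN : IsNorm N) : N 0 = 0 := (hN.1 0).mpr rfl

lemma N_neg (hN : IsNorm N) (x : Fin n → ℝ) : N (-x) = N x := by
  have := hN.2.1 (-1) x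
  simpa using this

lemma N_nonneg (hN : IsNorm N) (x : Fin n → ℝ) : 0 ≤ N x := by
  have h := hN.2.2 x (-x)
  rw [add_neg_cancel, N_zero hN, N_neg hN] at h
  linarith

/-- the norm as a finite max -/
lemma N_eq_sup' (hrep : ∀ x, N x = ⨆ i, dot (x' i) x) (x : Fin n → ℝ) :
    N x = Finset.univ.sup' Finset.univ_nonempty (fun i => dot (x' i) x) := by
  rw [hrep x, ← Finset.sup'_univ_eq_ciSup]

lemma dot_le_N (hrep : ∀ x, N x = ⨆ i, dot (x' i) x) (i : I) (x : Fin n → ℝ) :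
    dot (x' i) x ≤ N x := by
  rw [N_eq_sup' hrep]
  exact Finset.le_sup' (fun i => dot (x' i) x) (Finset.mem_univ i)

lemma exists_dot_eq_N (hrep : ∀ x, N x = ⨆ i, dot (x' i) x) (x : Fin n → ℝ) :
    ∃ i, N x = dot (x' i) x := by
  obtain ⟨i, _, hi⟩ := Finset.exists_mem_eq_sup' (Finset.univ_nonempty (α := I))
    (fun i => dot (x' i) x)
  exact ⟨i, by rw [N_eq_sup' hrep, hi]⟩

lemma continuous_N (hrep : ∀ x, N x = ⨆ i, dot (x' i) x) : Continuous N := by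
  have : Continuous fun x => Finset.univ.sup' (Finset.univ_nonempty (α := I))
      (fun i => dot (x' i) x) := by
    exact Continuous.finset_sup'_apply _ (fun i _ => continuous_dot_right (x' i))
  exact this.congr fun x => (N_eq_sup' hrep x).symm

lemma x'_mem_dualBall (hpoly : Set.range x' = (dualBall N).extremePoints ℝ) (i : I) :
    x' i ∈ dualBall N := by
  have : x' i ∈ (dualBall N).extremePoints ℝ := hpoly ▸ Set.mem_range_self i
  exact this.1

lemma neg_mem_dualBall (hN : IsNorm N) {y : Fin n → ℝ} (hy : y ∈ dualBall N) :
    -y ∈ dualBall N := by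
  intro x
  rw [dot_neg_left]
  have := hy (-x)
  rw [dot_neg_right, N_neg hN] at this
  linarith

lemma neg_extremePoint (hN : IsNorm N) {y : Fin n → ℝ}
    (hy : y ∈ (dualBall N).extremePoints ℝ) : -y ∈ (dualBall N).extremePoints ℝ := by
  refine ⟨neg_mem_dualBall hN hy.1, ?_⟩
  intro a ha b hb hseg
  obtain ⟨s, t, hs, ht, hst, habs⟩ := hseg
  have : y ∈ openSegment ℝ (-a) (-b) := by
    refine ⟨s, t, hs, ht, hst, ?_⟩
    rw [smul_neg, smul_neg, ← neg_add, habs, neg_neg]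
  have h2 := hy.2 (neg_mem_dualBall hN ha) (neg_mem_dualBall hN hb) this
  rw [← h2, neg_neg]

/-- symmetry of the extreme points -/
lemma exists_neg_x' (hN : IsNorm N) (hpoly : Set.range x' = (dualBall N).extremePoints ℝ)
    (i : I) : ∃ i', x' i' = -(x' i) := by
  have h1 : x' i ∈ (dualBall N).extremePoints ℝ := hpoly ▸ Set.mem_range_self i
  have h2 := neg_extremePoint hN h1
  rw [← hpoly] at h2
  exact h2

lemma abs_dot_le_N (hN : IsNorm N) (hrep : ∀ x, N x = ⨆ i, dot (x' i) x)
    (hpoly : Set.range x' = (dualBall N).extremePoints ℝ) (i : I) (x : Fin n → ℝ) :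
    |dot (x' i) x| ≤ N x := by
  rw [abs_le]
  refine ⟨?_, dot_le_N hrep i x⟩
  obtain ⟨i', hi'⟩ := exists_neg_x' hN hpoly i
  have := dot_le_N hrep i' x
  rw [hi', dot_neg_left] at this
  linarith

/-- norm lower bound via compactness of the Euclidean sphere -/
lemma exists_pos_lowerbound (hn : 1 ≤ n) (hN : IsNorm N)
    (hrep : ∀ x, N x = ⨆ i, dot (x' i) x) :
    ∃ r : ℝ, 0 < r ∧ ∀ x, r * ‖x‖ ≤ N x := by
  haveI : Nonempty (Fin n) := ⟨⟨0, hn⟩⟩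
  haveI : Nontrivial (Fin n → ℝ) := Function.nontrivial
  have hsne : (Metric.sphere (0 : Fin n → ℝ) 1).Nonempty :=
    NormedSpace.sphere_nonempty.mpr zero_le_one
  obtain ⟨z₀, hz₀, hmin⟩ := (isCompact_sphere (0 : Fin n → ℝ) 1).exists_isMinOn hsne
    (continuous_N hrep).continuousOn
  have hz₀ne : z₀ ≠ 0 := by
    intro h
    rw [h] at hz₀
    simp at hz₀
  refine ⟨N z₀, lt_of_le_of_ne (N_nonneg hN z₀) fun h => hz₀ne ((hN.1 z₀).mp h.symm), ?_⟩
  intro x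
  rcases eq_or_ne x 0 with rfl | hx
  · simp [N_zero hN]
  · have hxn : ‖x‖ ≠ 0 := norm_ne_zero_iff.mpr hx
    have hmem : ‖x‖⁻¹ • x ∈ Metric.sphere (0 : Fin n → ℝ) 1 := by
      simp [norm_smul, abs_of_nonneg (inv_nonneg.mpr (norm_nonneg x)), inv_mul_cancel₀ hxn]
    have h3 : N z₀ ≤ N (‖x‖⁻¹ • x) := hmin hmem
    have hNx : N (‖x‖⁻¹ • x) = ‖x‖⁻¹ * N x := by
      rw [hN.2.1, abs_of_nonneg (inv_nonneg.mpr (norm_nonneg x))]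
    rw [hNx] at h3
    have hpos : (0:ℝ) < ‖x‖ := norm_pos_iff.mpr hx
    calc N z₀ * ‖x‖ ≤ (‖x‖⁻¹ * N x) * ‖x‖ := by nlinarith [h3, hpos]
    _ = N x := by field_simp

end normlem
section kernel
variable {n : ℕ} {I : Type*} [Fintype I] [Nonempty I]
  {N : (Fin n → ℝ) → ℝ} {x' : I → Fin n → ℝ}

lemma polyK_eq_inf' (hrep : ∀ x, N x = ⨆ i, dot (x' i) x) (X x : Fin n → ℝ) :
    polyK N X x = Finset.univ.inf' Finset.univ_nonempty
      (fun i => (N X - dot (x' i) X) + dot (x' i) x) := by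
  unfold polyK
  rw [N_eq_sup' hrep (X - x), sub_sup']
  congr 1
  funext i
  rw [dot_sub_right]
  ring

lemma cfun_nonneg (hrep : ∀ x, N x = ⨆ i, dot (x' i) x) (X : Fin n → ℝ) (i : I) :
    0 ≤ N X - dot (x' i) X := by
  have := dot_le_N hrep i X; linarith

lemma exists_cfun_zero (hrep : ∀ x, N x = ⨆ i, dot (x' i) x) (X : Fin n → ℝ) :
    ∃ i, N X - dot (x' i) X = 0 := by
  obtain ⟨i, hi⟩ := exists_dot_eq_N hrep X
  exact ⟨i, by rw [hi]; ring⟩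

lemma abs_polyK_sub (hN : IsNorm N) (X a b : Fin n → ℝ) :
    |polyK N X a - polyK N X b| ≤ N (a - b) := by
  have h1 : N (X - b) ≤ N (X - a) + N (a - b) := by
    have := hN.2.2 (X - a) (a - b)
    have he : (X - a) + (a - b) = X - b := by abel
    rwa [he] at this
  have h2 : N (X - a) ≤ N (X - b) + N (a - b) := by
    have := hN.2.2 (X - b) (b - a)
    have he : (X - b) + (b - a) = X - a := by abel
    rw [he] at this
    have hne : N (b - a) = N (a - b) := by
      rw [← N_neg hN (b - a)]; congr 1; abel
    linarith
  rw [abs_le]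
  constructor <;> · simp only [polyK]; nlinarith

lemma polyK_zero (hN : IsNorm N) (X : Fin n → ℝ) : polyK N X 0 = 0 := by
  simp [polyK]

lemma continuous_polyK_X (hrep : ∀ x, N x = ⨆ i, dot (x' i) x) (x : Fin n → ℝ) :
    Continuous fun X => polyK N X x := by
  unfold polyK
  exact (continuous_N hrep).sub ((continuous_N hrep).comp
    ((continuous_id.sub continuous_const)))

lemma martin_lipschitz (hN : IsNorm N) {f : (Fin n → ℝ) → ℝ} (hf : f ∈ polyMartin N)
    (a b : Fin n → ℝ) : |f a - f b| ≤ N (a - b) := by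
  have hcl : IsClosed {g : (Fin n → ℝ) → ℝ | |g a - g b| ≤ N (a - b)} := by
    have : Continuous fun g : (Fin n → ℝ) → ℝ => |g a - g b| :=
      ((continuous_apply a).sub (continuous_apply b)).abs
    exact isClosed_le this continuous_const
  have hsub : polyKset N ⊆ {g | |g a - g b| ≤ N (a - b)} := by
    rintro g ⟨X, rfl⟩
    exact abs_polyK_sub hN X a b
  exact closure_minimal hsub hcl hf

lemma martin_zero (hN : IsNorm N) {f : (Fin n → ℝ) → ℝ} (hf : f ∈ polyMartin N) : f 0 = 0 := by
  have hcl : IsClosed {g : (Fin n → ℝ) → ℝ | g 0 = 0} :=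
    isClosed_eq (continuous_apply 0) continuous_const
  have hsub : polyKset N ⊆ {g | g 0 = 0} := by
    rintro g ⟨X, rfl⟩
    exact polyK_zero hN X
  exact closure_minimal hsub hcl hf

lemma exists_seq_tendsto (hN : IsNorm N) (hrep : ∀ x, N x = ⨆ i, dot (x' i) x)
    {f : (Fin n → ℝ) → ℝ} (hf : f ∈ polyMartin N) :
    ∃ X : ℕ → Fin n → ℝ, ∀ x, Tendsto (fun m => polyK N (X m) x) atTop (𝓝 (f x)) := by
  have hd : DenseRange (TopologicalSpace.denseSeq (Fin n → ℝ)) :=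
    TopologicalSpace.denseRange_denseSeq _
  set d := TopologicalSpace.denseSeq (Fin n → ℝ) with hdd
  have H : ∀ m : ℕ, ∃ X : Fin n → ℝ, ∀ k ≤ m,
      |polyK N X (d k) - f (d k)| < 1 / (m + 1) := by
    intro m
    have hpos : (0:ℝ) < 1 / (m + 1) := by positivity
    set U : Set ((Fin n → ℝ) → ℝ) :=
      ⋂ k ∈ Finset.range (m + 1), {g | |g (d k) - f (d k)| < 1 / (m + 1)} with hU
    have hUnhds : U ∈ 𝓝 f := by
      rw [hU]
      rw [Filter.biInter_finset_mem]
      intro k _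
      have hopen : IsOpen {g : (Fin n → ℝ) → ℝ | |g (d k) - f (d k)| < 1 / (m + 1)} := by
        have : Continuous fun g : (Fin n → ℝ) → ℝ => |g (d k) - f (d k)| :=
          ((continuous_apply (d k)).sub continuous_const).abs
        exact isOpen_lt this continuous_const
      exact hopen.mem_nhds (by simpa using hpos)
    obtain ⟨g, hgU, hgK⟩ := mem_closure_iff_nhds.mp hf U hUnhds
    obtain ⟨X, rfl⟩ := hgK
    refine ⟨X, fun k hk => ?_⟩
    have := Set.mem_iInter₂.mp hgU k (Finset.mem_range.mpr (Nat.lt_succ_of_le hk))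
    exact this
  choose X hX using H
  refine ⟨X, fun x => ?_⟩
  rw [Metric.tendsto_atTop]
  intro ε hε
  -- continuity of N at 0
  obtain ⟨δ, hδpos, hδ⟩ := Metric.continuous_iff.mp (continuous_N hrep) 0 (ε/4) (by linarith)
  obtain ⟨k, hk⟩ := Metric.denseRange_iff.mp hd x δ hδpos
  have hNk : N (x - d k) < ε / 4 := by
    have h1 : dist (x - d k) 0 < δ := by
      rw [dist_zero_right, ← dist_eq_norm]
      exact hk
    have := hδ _ h1
    rw [N_zero hN, dist_zero_right, Real.norm_eq_abs,
      abs_of_nonneg (N_nonneg hN _)] at this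
    exact this
  have hNk' : N (d k - x) < ε / 4 := by
    have : N (d k - x) = N (x - d k) := by
      rw [← N_neg hN (d k - x)]; congr 1; abel
    linarith
  refine ⟨max k (Nat.ceil (4 / ε)), fun m hm => ?_⟩
  have hkm : k ≤ m := le_trans (le_max_left _ _) hm
  have hce : Nat.ceil (4 / ε) ≤ m := le_trans (le_max_right _ _) hm
  have h4 : (4:ℝ) / ε < m + 1 := by
    have := Nat.le_ceil (4 / ε)
    have h2 : (Nat.ceil (4 / ε) : ℝ) ≤ m := by exact_mod_cast hce
    linarith
  have hinv : 1 / ((m:ℝ) + 1) < ε / 4 := by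
    rw [div_lt_div_iff₀ (by positivity) (by norm_num)]
    rw [div_lt_iff₀ hε] at h4
    nlinarith
  have h1 := hX m k hkm
  have h2 := abs_polyK_sub hN (X m) x (d k)
  have h3 := martin_lipschitz hN hf (d k) x
  rw [Real.dist_eq]
  have : |polyK N (X m) x - f x| ≤ |polyK N (X m) x - polyK N (X m) (d k)| +
      |polyK N (X m) (d k) - f (d k)| + |f (d k) - f x| := by
    have := abs_sub_le (polyK N (X m) x) (polyK N (X m) (d k)) (f (d k))
    have := abs_sub_le (polyK N (X m) x) (f (d k)) (f x)
    linarith [abs_sub_le (polyK N (X m) x) (polyK N (X m) (d k)) (f (d k)),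
      abs_sub_le (polyK N (X m) x) (f (d k)) (f x)]
  calc |polyK N (X m) x - f x| ≤ _ := this
  _ < ε/4 + 1/(m+1) + ε/4 := by
      push_cast
      gcongr
      · exact lt_of_le_of_lt h2 hNk
      · exact lt_of_le_of_lt h3 hNk'
  _ < ε := by linarith
end kernel
section facelem
variable {n : ℕ} {I : Type*} [Fintype I] [Nonempty I]
  {N : (Fin n → ℝ) → ℝ} {x' : I → Fin n → ℝ}

lemma dot_smul_left (a : Fin n → ℝ) (t : ℝ) (x : Fin n → ℝ) : dot (t • a) x = t * dot a x := by
  simp [dot, Finset.mul_sum, mul_assoc]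

lemma dot_add_left (a b x : Fin n → ℝ) : dot (a + b) x = dot a x + dot b x := by
  simp [dot, add_mul, Finset.sum_add_distrib]

/-- an extreme point of the big set lying in a subset is extreme in the subset -/
lemma extremePoint_mono {B F : Set (Fin n → ℝ)} (hFB : F ⊆ B) {p : Fin n → ℝ}
    (hp : p ∈ Set.extremePoints ℝ B) (hpF : p ∈ F) : p ∈ Set.extremePoints ℝ F :=
  ⟨hpF, fun _ hx1 _ hx2 hseg => hp.2 (hFB hx1) (hFB hx2) hseg⟩

/-- an extreme point of an exposed face is extreme in the big set -/
lemma extremePoint_of_face {B : Set (Fin n → ℝ)} {v : Fin n → ℝ} {c : ℝ}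
    (hle : ∀ y ∈ B, dot y v ≤ c) {p : Fin n → ℝ}
    (hp : p ∈ Set.extremePoints ℝ {y ∈ B | dot y v = c}) : p ∈ Set.extremePoints ℝ B := by
  refine ⟨hp.1.1, ?_⟩
  intro a ha b hb hseg
  obtain ⟨s, t, hs, ht, hst, heq⟩ := hseg
  have hdot : s * dot a v + t * dot b v = c := by
    have : dot (s • a + t • b) v = dot p v := by rw [heq]
    rw [dot_add_left, dot_smul_left, dot_smul_left] at this
    rw [this]
    exact hp.1.2
  have hsum : s * c + t * c = c := by rw [← add_mul, hst, one_mul]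
  have haf : dot a v = c := by
    by_contra hne
    have h1 : dot a v < c := lt_of_le_of_ne (hle a ha) hne
    have h2 : dot b v ≤ c := hle b hb
    nlinarith [mul_lt_mul_of_pos_left h1 hs, mul_le_mul_of_nonneg_left h2 ht.le]
  have hbf : dot b v = c := by
    by_contra hne
    have h1 : dot b v < c := lt_of_le_of_ne (hle b hb) hne
    nlinarith [mul_lt_mul_of_pos_left h1 ht, mul_le_mul_of_nonneg_left (hle a ha) hs.le]
  exact hp.2 ⟨ha, haf⟩ ⟨hb, hbf⟩ ⟨s, t, hs, ht, hst, heq⟩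

lemma face_facts (hN : IsNorm N) (hrep : ∀ x, N x = ⨆ i, dot (x' i) x)
    (hpoly : Set.range x' = (dualBall N).extremePoints ℝ)
    {F : Set (Fin n → ℝ)} (hF : IsProperFace (dualBall N) F) :
    ∃ (v : Fin n → ℝ) (c : ℝ), 0 < c ∧ c = N v ∧ (∀ y ∈ dualBall N, dot y v ≤ c) ∧
      F = {y ∈ dualBall N | dot y v = c} := by
  obtain ⟨v, c, h1, h2, h3, h4⟩ := hF
  have hcN : c = N v := by
    apply le_antisymm
    · obtain ⟨y, hy, hyc⟩ := h2
      rw [← hyc]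
      exact hy v
    · rw [N_eq_sup' hrep]
      exact Finset.sup'_le _ _ fun i _ => h1 _ (x'_mem_dualBall hpoly i)
  have hvne : v ≠ 0 := by
    intro hv
    apply h4
    rw [h3]
    have hc0 : c = 0 := by
      obtain ⟨y, _, hyc⟩ := h2
      rw [← hyc, hv, dot_zero_right]
    ext y
    simp only [Set.mem_setOf_eq, hv, dot_zero_right, hc0]
    tauto
  have hNv : 0 < N v := by
    rcases lt_or_eq_of_le (N_nonneg hN v) with h | h
    · exact h
    · exact absurd ((hN.1 v).mp h.symm) hvne
  exact ⟨v, c, hcN ▸ hNv, hcN, h1, h3⟩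

/-- eventual formula for the norm along a ray towards a face -/
lemma eventual_N (hrep : ∀ x, N x = ⨆ i, dot (x' i) x)
    {J : Finset I} (hJ : J.Nonempty) {v : Fin n → ℝ} {c : ℝ}
    (hJv : ∀ j ∈ J, dot (x' j) v = c)
    (hoff : ∀ i, x' i ∉ x' '' ↑J → dot (x' i) v < c) (z : Fin n → ℝ) :
    ∃ t₀ : ℝ, ∀ t ≥ t₀, N (z + t • v) =
      J.sup' hJ (fun j => dot (x' j) z) + t * c := by
  set M := J.sup' hJ (fun j => dot (x' j) z) with hM
  have key : ∀ i : I, ∃ ti : ℝ, ∀ t ≥ ti, dot (x' i) z + t * dot (x' i) v ≤ M + t * c := by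
    intro i
    by_cases hi : x' i ∈ x' '' ↑J
    · obtain ⟨j, hj, hji⟩ := hi
      refine ⟨0, fun t _ => ?_⟩
      have h1 : dot (x' i) z = dot (x' j) z := by rw [← hji]
      have h2 : dot (x' i) v = dot (x' j) v := by rw [← hji]
      rw [h1, h2, hJv j hj]
      have : dot (x' j) z ≤ M := Finset.le_sup' (fun j => dot (x' j) z) hj
      linarith
    · have hδ : 0 < c - dot (x' i) v := by
        have := hoff i hi
        linarith
      refine ⟨(dot (x' i) z - M) / (c - dot (x' i) v), fun t ht => ?_⟩
      rw [ge_iff_le, div_le_iff₀ hδ] at ht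
      nlinarith
  choose ti hti using key
  refine ⟨Finset.univ.sup' Finset.univ_nonempty ti, fun t ht => ?_⟩
  have hexp : ∀ i : I, dot (x' i) (z + t • v) = dot (x' i) z + t * dot (x' i) v := by
    intro i
    rw [dot_add_right, dot_smul_right]
  rw [N_eq_sup' hrep]
  apply le_antisymm
  · apply Finset.sup'_le
    intro i _
    rw [hexp i]
    exact hti i t (le_trans (Finset.le_sup' ti (Finset.mem_univ i)) ht)
  · obtain ⟨j₀, hj₀, hMj₀⟩ := Finset.exists_mem_eq_sup' hJ (fun j => dot (x' j) z)
    have heq2 : dot (x' j₀) (z + t • v) = M + t * c := by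
      rw [hexp j₀, hJv j₀ hj₀, hM, hMj₀]
    rw [← heq2]
    exact Finset.le_sup' (fun i => dot (x' i) (z + t • v)) (Finset.mem_univ j₀)

/-- eventual formula for the kernel along a ray towards a face -/
lemma eventual_K (hrep : ∀ x, N x = ⨆ i, dot (x' i) x)
    {J : Finset I} (hJ : J.Nonempty) {v : Fin n → ℝ} {c : ℝ}
    (hJv : ∀ j ∈ J, dot (x' j) v = c)
    (hoff : ∀ i, x' i ∉ x' '' ↑J → dot (x' i) v < c) (X x : Fin n → ℝ) :
    ∃ t₀ : ℝ, ∀ t ≥ t₀, polyK N (X + t • v) x =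
      J.inf' hJ (fun j => dot (x' j) (x - X)) + J.sup' hJ (fun j => dot (x' j) X) := by
  obtain ⟨t₁, ht₁⟩ := eventual_N hrep hJ hJv hoff X
  obtain ⟨t₂, ht₂⟩ := eventual_N hrep hJ hJv hoff (X - x)
  refine ⟨max t₁ t₂, fun t ht => ?_⟩
  have h1 := ht₁ t (le_trans (le_max_left _ _) ht)
  have h2 := ht₂ t (le_trans (le_max_right _ _) ht)
  have he : X + t • v - x = (X - x) + t • v := by abel
  unfold polyK
  rw [he, h1, h2]
  have h3 : (-(J.sup' hJ fun j => dot (x' j) (X - x))) =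
      J.inf' hJ (fun j => dot (x' j) (x - X)) := by
    have h4 := sub_sup' J hJ 0 (fun j => dot (x' j) (X - x))
    rw [zero_sub] at h4
    rw [h4]
    apply Finset.inf'_congr (H := hJ) rfl
    intro j _
    rw [dot_sub_right, dot_sub_right]
    ring
  rw [← h3]
  ring

end facelem
section easydir
variable {n : ℕ} {I : Type*} [Fintype I] [Nonempty I]
  {N : (Fin n → ℝ) → ℝ} {x' : I → Fin n → ℝ}

lemma bdry_mem_martin (hrep : ∀ x, N x = ⨆ i, dot (x' i) x)
    {J : Finset I} (hJ : J.Nonempty) {v : Fin n → ℝ} {c : ℝ}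
    (hJv : ∀ j ∈ J, dot (x' j) v = c)
    (hoff : ∀ i, x' i ∉ x' '' ↑J → dot (x' i) v < c) (X : Fin n → ℝ) :
    (fun x => J.inf' hJ (fun j => dot (x' j) (x - X)) +
      J.sup' hJ (fun j => dot (x' j) X)) ∈ polyMartin N := by
  apply mem_closure_of_tendsto (f := fun m : ℕ => polyK N (X + (m : ℝ) • v)) (b := atTop)
  · rw [tendsto_pi_nhds]
    intro x
    obtain ⟨t₀, ht₀⟩ := eventual_K hrep hJ hJv hoff X x
    apply Filter.Tendsto.congr' _ (tendsto_const_nhds (x := J.inf' hJ (fun j => dot (x' j) (x - X)) + J.sup' hJ (fun j => dot (x' j) X)))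
    filter_upwards [eventually_ge_atTop (Nat.ceil (max t₀ 0))] with m hm
    have hm' : (max t₀ 0 : ℝ) ≤ m := Nat.ceil_le.mp hm
    exact (ht₀ m (le_trans (le_max_left _ _) hm')).symm
  · exact Filter.Eventually.of_forall fun m => Set.mem_range_self _

lemma bdry_val_ray {J : Finset I} (hJ : J.Nonempty) {v : Fin n → ℝ} {c : ℝ}
    (hJv : ∀ j ∈ J, dot (x' j) v = c) (X : Fin n → ℝ) (s : ℝ) :
    J.inf' hJ (fun j => dot (x' j) (s • v - X)) +
      J.sup' hJ (fun j => dot (x' j) X) = s * c := by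
  have h1 : J.inf' hJ (fun j => dot (x' j) (s • v - X)) =
      J.inf' hJ (fun j => s * c - dot (x' j) X) := by
    apply Finset.inf'_congr (H := hJ) rfl
    intro j hj
    rw [dot_sub_right, dot_smul_right, hJv j hj]
  rw [h1, ← sub_sup' J hJ (s * c) (fun j => dot (x' j) X)]
  ring

lemma bdry_not_K (hN : IsNorm N) (hrep : ∀ x, N x = ⨆ i, dot (x' i) x)
    (hpoly : Set.range x' = (dualBall N).extremePoints ℝ)
    {J : Finset I} (hJ : J.Nonempty) {v : Fin n → ℝ} {c : ℝ}
    (hJv : ∀ j ∈ J, dot (x' j) v = c) (hc : 0 < c) (X : Fin n → ℝ) :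
    (fun x => J.inf' hJ (fun j => dot (x' j) (x - X)) +
      J.sup' hJ (fun j => dot (x' j) X)) ∉ polyKset N := by
  rintro ⟨Y, hY⟩
  obtain ⟨j₀, hj₀⟩ := id hJ
  obtain ⟨i₁, hi₁⟩ := exists_neg_x' hN hpoly j₀
  have hdi₁ : dot (x' i₁) v = -c := by
    rw [hi₁, dot_neg_left, hJv j₀ hj₀]
  have key : ∀ s : ℝ, polyK N Y (s • v) = s * c := by
    intro s
    rw [hY]
    exact bdry_val_ray hJ hJv X s
  have hineq : ∀ s : ℝ, polyK N Y (s • v) ≤ N Y - dot (x' i₁) Y - s * c := by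
    intro s
    have h2 := dot_le_N hrep i₁ (Y - s • v)
    rw [dot_sub_right, dot_smul_right, hdi₁] at h2
    simp only [polyK]
    nlinarith
  set B := N Y - dot (x' i₁) Y with hB
  have h3 := hineq ((|B| + 1) / (2 * c))
  rw [key] at h3
  have h4 : (|B| + 1) / (2 * c) * c = (|B| + 1) / 2 := by
    field_simp
  rw [h4] at h3
  have := le_abs_self B
  linarith

lemma bdry_busemann (hN : IsNorm N) (hrep : ∀ x, N x = ⨆ i, dot (x' i) x)
    {J : Finset I} (hJ : J.Nonempty) {v : Fin n → ℝ} {c : ℝ}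
    (hJv : ∀ j ∈ J, dot (x' j) v = c)
    (hoff : ∀ i, x' i ∉ x' '' ↑J → dot (x' i) v < c)
    (hc : 0 < c) (hcN : c = N v) (X : Fin n → ℝ) :
    IsBusemannPt N (fun x => J.inf' hJ (fun j => dot (x' j) (x - X)) +
      J.sup' hJ (fun j => dot (x' j) X)) := by
  obtain ⟨u, hu⟩ : ∃ u : Fin n → ℝ, u = c⁻¹ • v := ⟨_, rfl⟩
  have hJu : ∀ j ∈ J, dot (x' j) u = 1 := by
    intro j hj
    rw [hu, dot_smul_right, hJv j hj, inv_mul_cancel₀ (ne_of_gt hc)]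
  have hoffu : ∀ i, x' i ∉ x' '' ↑J → dot (x' i) u < 1 := by
    intro i hi
    rw [hu, dot_smul_right]
    have := mul_lt_mul_of_pos_left (hoff i hi) (inv_pos.mpr hc)
    rwa [inv_mul_cancel₀ (ne_of_gt hc)] at this
  have hNu : N u = 1 := by
    rw [hu, hN.2.1, abs_of_pos (inv_pos.mpr hc), ← hcN, inv_mul_cancel₀ (ne_of_gt hc)]
  refine ⟨Set.Ici 0, fun t => X + t • u, ⟨Set.mem_Ici.mpr le_rfl, fun t ht => ht, not_bddAbove_Ici (0:ℝ), ?_⟩, ?_⟩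
  · intro ε hε
    refine ⟨0, fun s hs _ t ht hst => ?_⟩
    have h1 : X + t • u - (X + s • u) = (t - s) • u := by
      rw [sub_smul]; abel
    have h2 : X + s • u - (X + (0:ℝ) • u) = s • u := by
      rw [zero_smul]; abel
    rw [h1, h2, hN.2.1 (t - s) u, hN.2.1 s u, hNu]
    rw [abs_of_nonneg (sub_nonneg.mpr hst), abs_of_nonneg (Set.mem_Ici.mp hs)]
    simp only [mul_one]
    rw [show t - s + s - t = 0 by ring]
    simpa using hε
  · intro x
    obtain ⟨t₀, ht₀⟩ := eventual_K hrep hJ hJu hoffu X x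
    apply Filter.Tendsto.congr' _ (tendsto_const_nhds
      (x := J.inf' hJ (fun j => dot (x' j) (x - X)) + J.sup' hJ (fun j => dot (x' j) X)))
    rw [Filter.EventuallyEq, eventually_atTop]
    refine ⟨⟨max t₀ 0, Set.mem_Ici.mpr (le_max_right _ _)⟩, fun b hb => ?_⟩
    have hb' : t₀ ≤ (b : ℝ) := le_trans (le_max_left _ _) (Subtype.coe_le_coe.mpr hb)
    exact (ht₀ (b : ℝ) hb').symm

/-- the full easy direction -/
lemma easy_dir (hN : IsNorm N) (hrep : ∀ x, N x = ⨆ i, dot (x' i) x)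
    (hpoly : Set.range x' = (dualBall N).extremePoints ℝ)
    {X : Fin n → ℝ} {J : Finset I} {hJ : J.Nonempty} {F : Set (Fin n → ℝ)}
    (hface : IsProperFace (dualBall N) F) (hext : x' '' ↑J = F.extremePoints ℝ) :
    (fun x => J.inf' hJ (fun j => dot (x' j) (x - X)) +
      J.sup' hJ (fun j => dot (x' j) X)) ∈ polyMartin N \ polyKset N ∧
    IsBusemannPt N (fun x => J.inf' hJ (fun j => dot (x' j) (x - X)) +
      J.sup' hJ (fun j => dot (x' j) X)) := by
  obtain ⟨v, c, hc, hcN, hle, hFeq⟩ := face_facts hN hrep hpoly hface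
  have hJv : ∀ j ∈ J, dot (x' j) v = c := by
    intro j hj
    have h1 : x' j ∈ x' '' ↑J := Set.mem_image_of_mem _ (Finset.mem_coe.mpr hj)
    rw [hext] at h1
    have h2 : x' j ∈ F := extremePoints_subset h1
    rw [hFeq] at h2
    exact h2.2
  have hoff : ∀ i, x' i ∉ x' '' ↑J → dot (x' i) v < c := by
    intro i hi
    have hiball : x' i ∈ dualBall N := x'_mem_dualBall hpoly i
    refine lt_of_le_of_ne (hle _ hiball) fun heq => hi ?_
    rw [hext]
    have hiF : x' i ∈ F := by rw [hFeq]; exact ⟨hiball, heq⟩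
    have hiext : x' i ∈ Set.extremePoints ℝ (dualBall N) := hpoly ▸ Set.mem_range_self i
    exact extremePoint_mono (by rw [hFeq]; exact Set.sep_subset _ _) hiext hiF
  refine ⟨⟨bdry_mem_martin hrep hJ hJv hoff X, bdry_not_K hN hrep hpoly hJ hJv hc X⟩,
    bdry_busemann hN hrep hJ hJv hoff hc hcN X⟩

end easydir
section harddir
variable {n : ℕ} {I : Type*} [Fintype I] [Nonempty I]
  {N : (Fin n → ℝ) → ℝ} {x' : I → Fin n → ℝ}

lemma dot_zero_left (x : Fin n → ℝ) : dot 0 x = 0 := by simp [dot]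

lemma zero_mem_dualBall (hN : IsNorm N) : (0 : Fin n → ℝ) ∈ dualBall N := by
  intro x
  rw [dot_zero_left]
  exact N_nonneg hN x

lemma inf'_add_const {J : Finset I} (hJ : J.Nonempty) (f : I → ℝ) (a : ℝ) :
    J.inf' hJ f + a = J.inf' hJ (fun j => f j + a) := by
  apply le_antisymm
  · apply Finset.le_inf'
    intro j hj
    have := Finset.inf'_le f hj
    linarith
  · obtain ⟨j₀, hj₀, he⟩ := Finset.exists_mem_eq_inf' hJ f
    calc J.inf' hJ (fun j => f j + a) ≤ f j₀ + a := Finset.inf'_le _ hj₀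
    _ = J.inf' hJ f + a := by rw [he]

/-- if the approximating sequence has a bounded subsequence, the limit is a kernel column -/
lemma mem_K_of_not_norm_tendsto (hrep : ∀ x, N x = ⨆ i, dot (x' i) x)
    {f : (Fin n → ℝ) → ℝ} {X : ℕ → Fin n → ℝ}
    (hconv : ∀ x, Tendsto (fun m => polyK N (X m) x) atTop (𝓝 (f x)))
    (hnot : ¬ Tendsto (fun m => ‖X m‖) atTop atTop) : f ∈ polyKset N := by
  rw [tendsto_atTop_atTop] at hnot
  push_neg at hnot
  obtain ⟨b, hb⟩ := hnot
  have hfreq : ∃ᶠ m in atTop, ‖X m‖ < b := by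
    rw [Nat.frequently_atTop_iff_infinite]
    by_contra hfin
    rw [Set.not_infinite] at hfin
    obtain ⟨M, hM⟩ := hfin.bddAbove
    obtain ⟨m, hm, hmb⟩ := hb (M + 1)
    rcases lt_or_ge ‖X m‖ b with h | h
    · have : m ≤ M := hM h
      omega
    · linarith
  obtain ⟨φ, hφ, hφb⟩ := Filter.extraction_of_frequently_atTop hfreq
  have hmem : ∀ m, X (φ m) ∈ Metric.closedBall (0 : Fin n → ℝ) b := by
    intro m
    rw [Metric.mem_closedBall, dist_zero_right]
    exact (hφb m).le
  obtain ⟨Y, _, ψ, hψ, hYlim⟩ := tendsto_subseq_of_bounded Metric.isBounded_closedBall hmem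
  refine ⟨Y, ?_⟩
  funext x
  have h1 : Tendsto (fun m => polyK N (X (φ (ψ m))) x) atTop (𝓝 (f x)) :=
    (hconv x).comp ((hφ.comp hψ).tendsto_atTop)
  have h2 : Tendsto (fun m => polyK N (X (φ (ψ m))) x) atTop (𝓝 (polyK N Y x)) :=
    ((continuous_polyK_X hrep x).continuousAt.tendsto).comp hYlim
  exact tendsto_nhds_unique h2 h1

/-- compactness extraction of the limit cost vector -/
lemma exists_subseq_ennreal (c : ℕ → I → ℝ) :
    ∃ (φ : ℕ → ℕ) (ch : I → ENNReal), StrictMono φ ∧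
      ∀ i, Tendsto (fun m => ENNReal.ofReal (c (φ m) i)) atTop (𝓝 (ch i)) := by
  obtain ⟨ch, _, φ, hφ, hlim⟩ := (isCompact_univ (X := I → ENNReal)).tendsto_subseq
    (x := fun m i => ENNReal.ofReal (c m i)) (fun m => Set.mem_univ _)
  refine ⟨φ, ch, hφ, fun i => ?_⟩
  have := tendsto_pi_nhds.mp hlim i
  exact this

lemma tendsto_real_of_ennreal {a : ℕ → ℝ} (ha : ∀ m, 0 ≤ a m) {L : ENNReal} (hL : L ≠ ⊤)
    (h : Tendsto (fun m => ENNReal.ofReal (a m)) atTop (𝓝 L)) :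
    Tendsto a atTop (𝓝 L.toReal) := by
  have h2 := (ENNReal.tendsto_toReal hL).comp h
  have heq : (ENNReal.toReal ∘ fun m => ENNReal.ofReal (a m)) = a := by
    funext m
    exact ENNReal.toReal_ofReal (ha m)
  rwa [heq] at h2

lemma tendsto_atTop_of_ennreal {a : ℕ → ℝ}
    (h : Tendsto (fun m => ENNReal.ofReal (a m)) atTop (𝓝 ⊤)) :
    Tendsto a atTop atTop := by
  rw [tendsto_atTop]
  intro b
  have hmem : Set.Ioi (ENNReal.ofReal (max b 0)) ∈ 𝓝 (⊤ : ENNReal) :=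
    isOpen_Ioi.mem_nhds (Set.mem_Ioi.mpr ENNReal.ofReal_lt_top)
  filter_upwards [h hmem] with m hm
  simp only [Set.mem_preimage, Set.mem_Ioi] at hm
  by_contra hab
  push_neg at hab
  have : ENNReal.ofReal (a m) ≤ ENNReal.ofReal (max b 0) :=
    ENNReal.ofReal_le_ofReal (le_trans hab.le (le_max_left _ _))
  exact absurd hm (not_lt.mpr this)

end harddir
section hardmain
variable {n : ℕ} {I : Type*} [Fintype I] [Nonempty I]
  {N : (Fin n → ℝ) → ℝ} {x' : I → Fin n → ℝ}

/-- the hard direction: every Martin boundary point has the face representation -/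
lemma hard_repr (hn : 1 ≤ n) (hN : IsNorm N) (hrep : ∀ x, N x = ⨆ i, dot (x' i) x)
    (hpoly : Set.range x' = (dualBall N).extremePoints ℝ)
    {f : (Fin n → ℝ) → ℝ} (hf : f ∈ polyMartin N) (hfK : f ∉ polyKset N) :
    ∃ (X : Fin n → ℝ) (J : Finset I) (hJ : J.Nonempty) (F : Set (Fin n → ℝ)),
      IsProperFace (dualBall N) F ∧ x' '' ↑J = F.extremePoints ℝ ∧
      f = fun x => J.inf' hJ (fun j => dot (x' j) (x - X)) +
        J.sup' hJ (fun j => dot (x' j) X) := by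
  classical
  obtain ⟨X0, hconv0⟩ := exists_seq_tendsto hN hrep hf
  have hXnorm : Tendsto (fun m => ‖X0 m‖) atTop atTop := by
    by_contra h
    exact hfK (mem_K_of_not_norm_tendsto hrep hconv0 h)
  obtain ⟨φ, ch, hφ, hlim⟩ :=
    exists_subseq_ennreal (fun m i => N (X0 m) - dot (x' i) (X0 m))
  set c : ℕ → I → ℝ := fun m i => N (X0 (φ m)) - dot (x' i) (X0 (φ m)) with hc
  have hcnn : ∀ m i, 0 ≤ c m i := fun m i => cfun_nonneg hrep (X0 (φ m)) i
  set J : Finset I := Finset.univ.filter (fun i => ch i ≠ ⊤) with hJdef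
  set cr : I → ℝ := fun i => (ch i).toReal with hcr
  have hJconv : ∀ j ∈ J, Tendsto (fun m => c m j) atTop (𝓝 (cr j)) := by
    intro j hj
    have hne : ch j ≠ ⊤ := (Finset.mem_filter.mp hj).2
    exact tendsto_real_of_ennreal (fun m => hcnn m j) hne (hlim j)
  have hIdiv : ∀ i ∉ J, Tendsto (fun m => c m i) atTop atTop := by
    intro i hi
    have : ch i = ⊤ := by
      by_contra h
      exact hi (Finset.mem_filter.mpr ⟨Finset.mem_univ i, h⟩)
    exact tendsto_atTop_of_ennreal (this ▸ hlim i)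
  obtain ⟨r, hr, hrle⟩ := exists_pos_lowerbound hn hN hrep
  have hXn : Tendsto (fun m => ‖X0 (φ m)‖) atTop atTop := hXnorm.comp hφ.tendsto_atTop
  have hNX : Tendsto (fun m => N (X0 (φ m))) atTop atTop :=
    tendsto_atTop_mono (fun m => hrle (X0 (φ m))) (hXn.const_mul_atTop hr)
  -- pigeonhole: an index whose cost vanishes along a subsequence
  have hzero : ∀ m, ∃ i, c m i = 0 := fun m => exists_cfun_zero hrep (X0 (φ m))
  have hpigeon : ∃ i₀, {m | c m i₀ = 0}.Infinite := by
    by_contra hfin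
    push_neg at hfin
    have hsub : (Set.univ : Set ℕ) ⊆ ⋃ i, {m | c m i = 0} := by
      intro m _
      obtain ⟨i, hi⟩ := hzero m
      exact Set.mem_iUnion.mpr ⟨i, hi⟩
    exact Set.infinite_univ ((Set.finite_iUnion hfin).subset hsub)
  obtain ⟨i₀, hi₀inf⟩ := hpigeon
  have hfreq : ∃ᶠ m in atTop, c m i₀ = 0 := Nat.frequently_atTop_iff_infinite.mpr hi₀inf
  have hi₀J : i₀ ∈ J := by
    by_contra h
    obtain ⟨m, h0, h1⟩ :=
      (hfreq.and_eventually ((hIdiv i₀ h).eventually_ge_atTop 1)).exists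
    rw [h0] at h1
    linarith
  have hcr₀ : cr i₀ = 0 := by
    have h2 : ∃ᶠ y in 𝓝 (cr i₀), y = 0 := (hJconv i₀ hi₀J).frequently hfreq
    have h3 : cr i₀ ∈ closure ({0} : Set ℝ) :=
      mem_closure_iff_frequently.mpr (h2.mono fun y hy => by rw [hy]; exact rfl)
    rwa [closure_singleton, Set.mem_singleton_iff] at h3
  have hJ : J.Nonempty := ⟨i₀, hi₀J⟩
  have hcrnn : ∀ j ∈ J, 0 ≤ cr j := fun j hj =>
    ge_of_tendsto' (hJconv j hj) (fun m => hcnn m j)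
  -- the symmetric index escapes
  obtain ⟨i₁, hi₁⟩ := exists_neg_x' hN hpoly i₀
  have hc1 : ∀ m, c m i₁ = - c m i₀ + 2 * N (X0 (φ m)) := by
    intro m
    simp only [hc, hi₁, dot_neg_left]
    ring
  have hdiv1 : Tendsto (fun m => c m i₁) atTop atTop := by
    have := ((hJconv i₀ hi₀J).neg).add_atTop (hNX.const_mul_atTop (by norm_num : (0:ℝ) < 2))
    refine this.congr fun m => ?_
    rw [← hc1 m]
  have hi₁J : i₁ ∉ J := fun hmem =>
    not_tendsto_atTop_of_tendsto_nhds (hJconv i₁ hmem) hdiv1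
  -- the pointwise formula for f
  have hfx : ∀ x, f x = J.inf' hJ (fun j => cr j + dot (x' j) x) := by
    intro x
    have hJinf : Tendsto (fun m => J.inf' hJ (fun j => c m j + dot (x' j) x)) atTop
        (𝓝 (J.inf' hJ (fun j => cr j + dot (x' j) x))) :=
      Filter.Tendsto.finset_inf'_nhds_apply hJ
        (fun j hj => (hJconv j hj).add tendsto_const_nhds)
    set L := J.inf' hJ (fun j => cr j + dot (x' j) x) with hL
    have hev1 : ∀ᶠ m in atTop, J.inf' hJ (fun j => c m j + dot (x' j) x) ≤ L + 1 :=
      hJinf.eventually (eventually_le_nhds (lt_add_one L))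
    have hev2 : ∀ᶠ m in atTop, ∀ i ∈ Finset.univ \ J, L + 1 ≤ c m i + dot (x' i) x := by
      rw [Filter.eventually_all_finset]
      intro i hi
      have hnot : i ∉ J := (Finset.mem_sdiff.mp hi).2
      filter_upwards [(hIdiv i hnot).eventually_ge_atTop (L + 1 - dot (x' i) x)] with m hm
      linarith
    have hEE : (fun m => J.inf' hJ (fun j => c m j + dot (x' j) x)) =ᶠ[atTop]
        (fun m => Finset.univ.inf' Finset.univ_nonempty (fun i => c m i + dot (x' i) x)) := by
      filter_upwards [hev1, hev2] with m h1 h2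
      apply le_antisymm
      · apply Finset.le_inf'
        intro i _
        by_cases hiJ : i ∈ J
        · exact Finset.inf'_le _ hiJ
        · have := h2 i (Finset.mem_sdiff.mpr ⟨Finset.mem_univ i, hiJ⟩)
          linarith
      · obtain ⟨j, hjJ, hje⟩ := Finset.exists_mem_eq_inf' hJ (fun j => c m j + dot (x' j) x)
        rw [hje]
        exact Finset.inf'_le _ (Finset.mem_univ j)
    have h3 : Tendsto (fun m => polyK N (X0 (φ m)) x) atTop (𝓝 L) := by
      have heq : (fun m => polyK N (X0 (φ m)) x) =
          fun m => Finset.univ.inf' Finset.univ_nonempty (fun i => c m i + dot (x' i) x) :=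
        funext fun m => polyK_eq_inf' hrep _ x
      rw [heq]
      exact Filter.Tendsto.congr' hEE hJinf
    exact tendsto_nhds_unique ((hconv0 x).comp hφ.tendsto_atTop) h3
  -- linear algebra: realize the limit differences
  set P := ({j // j ∈ J} × {j // j ∈ J}) with hP
  set Λ : (Fin n → ℝ) →ₗ[ℝ] (P → ℝ) :=
    { toFun := fun X => fun p => dot (x' ↑p.1) X - dot (x' ↑p.2) X
      map_add' := by
        intro a b
        funext p
        simp only [Pi.add_apply, dot_add_right]
        ring
      map_smul' := by
        intro t a
        funext p
        simp only [Pi.smul_apply, smul_eq_mul, dot_smul_right, RingHom.id_apply]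
        ring } with hΛ
  have hΛapp : ∀ (Y : Fin n → ℝ) (p : P), Λ Y p = dot (x' ↑p.1) Y - dot (x' ↑p.2) Y :=
    fun Y p => rfl
  have hcd : ∀ (m : ℕ) (i : I), dot (x' i) (X0 (φ m)) = N (X0 (φ m)) - c m i := by
    intro m i
    simp only [hc]
    ring
  have hg : (fun p : P => cr ↑p.2 - cr ↑p.1) ∈ LinearMap.range Λ := by
    have hclosed : IsClosed ((LinearMap.range Λ : Submodule ℝ (P → ℝ)) : Set (P → ℝ)) :=
      Submodule.closed_of_finiteDimensional _
    refine hclosed.mem_of_tendsto (f := fun m => Λ (X0 (φ m))) (b := atTop) ?_ ?_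
    · rw [tendsto_pi_nhds]
      intro p
      have hco : ∀ m, Λ (X0 (φ m)) p = c m ↑p.2 - c m ↑p.1 := by
        intro m
        rw [hΛapp, hcd, hcd]
        ring
      have := (hJconv ↑p.2 p.2.2).sub (hJconv ↑p.1 p.1.2)
      exact this.congr fun m => (hco m).symm
    · exact Filter.Eventually.of_forall fun m => LinearMap.mem_range_self _ _
  obtain ⟨Xh, hXh⟩ := hg
  have hXhp : ∀ (j k : I) (hj : j ∈ J) (hk : k ∈ J),
      dot (x' j) Xh - dot (x' k) Xh = cr k - cr j := by
    intro j k hj hk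
    have := congrFun hXh (⟨j, hj⟩, ⟨k, hk⟩)
    exact this
  -- right inverse and equalization
  obtain ⟨ρ, hρ⟩ := Λ.rangeRestrict.exists_rightInverse_of_surjective
    (LinearMap.range_eq_top.mpr Λ.surjective_rangeRestrict)
  have hρ' : ∀ q : ↥(LinearMap.range Λ), Λ (ρ q) = ↑q := by
    intro q
    have := LinearMap.congr_fun hρ q
    exact congrArg Subtype.val this
  set z : ℕ → Fin n → ℝ := fun m => ρ (Λ.rangeRestrict (X0 (φ m) - Xh)) with hz
  have hΛv : Tendsto (fun m => Λ (X0 (φ m) - Xh)) atTop (𝓝 0) := by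
    rw [tendsto_pi_nhds]
    intro p
    have hco : ∀ m, Λ (X0 (φ m) - Xh) p =
        (c m ↑p.2 - c m ↑p.1) - (cr ↑p.2 - cr ↑p.1) := by
      intro m
      have hXhd := hXhp ↑p.1 ↑p.2 p.1.2 p.2.2
      rw [hΛapp, dot_sub_right, dot_sub_right, hcd, hcd]
      linarith
    have h4 : Tendsto (fun m => (c m ↑p.2 - c m ↑p.1) - (cr ↑p.2 - cr ↑p.1)) atTop
        (𝓝 ((cr ↑p.2 - cr ↑p.1) - (cr ↑p.2 - cr ↑p.1))) :=
      ((hJconv ↑p.2 p.2.2).sub (hJconv ↑p.1 p.1.2)).sub tendsto_const_nhds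
    rw [sub_self] at h4
    have h0 : (0 : P → ℝ) p = 0 := rfl
    rw [h0]
    exact h4.congr fun m => (hco m).symm
  have hz0 : Tendsto z atTop (𝓝 0) := by
    have hrr : Tendsto (fun m => Λ.rangeRestrict (X0 (φ m) - Xh)) atTop
        (𝓝 (0 : ↥(LinearMap.range Λ))) := by
      rw [tendsto_subtype_rng]
      exact hΛv
    have := (ρ.continuous_of_finiteDimensional.tendsto _).comp hrr
    rwa [map_zero] at this
  set w : ℕ → Fin n → ℝ := fun m => (X0 (φ m) - Xh) - z m with hw
  have hΛw : ∀ m, Λ (w m) = 0 := by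
    intro m
    rw [hw]
    simp only [map_sub]
    rw [hz, hρ']
    simp
  have hweq : ∀ (m : ℕ) (j k : I), j ∈ J → k ∈ J → dot (x' j) (w m) = dot (x' k) (w m) := by
    intro m j k hj hk
    have := congrFun (hΛw m) (⟨j, hj⟩, ⟨k, hk⟩)
    have h5 : dot (x' j) (w m) - dot (x' k) (w m) = 0 := this
    linarith
  -- divergence of the gap for indices off J
  have hgap : ∀ i ∉ J, Tendsto (fun m => dot (x' i₀) (w m) - dot (x' i) (w m)) atTop atTop := by
    intro i hi
    have hco : ∀ m, dot (x' i₀) (w m) - dot (x' i) (w m) =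
        (- c m i₀ - (dot (x' i₀) Xh - dot (x' i) Xh) -
          (dot (x' i₀) (z m) - dot (x' i) (z m))) + c m i := by
      intro m
      rw [hw]
      simp only [dot_sub_right]
      rw [hcd, hcd]
      ring
    have hzt : Tendsto (fun m => dot (x' i₀) (z m) - dot (x' i) (z m)) atTop (𝓝 0) := by
      have h6 : Tendsto (fun m => dot (x' i₀) (z m)) atTop (𝓝 0) := by
        have := ((continuous_dot_right (x' i₀)).tendsto 0).comp hz0
        rwa [dot_zero_right] at this
      have h7 : Tendsto (fun m => dot (x' i)  (z m)) atTop (𝓝 0) := by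
        have := ((continuous_dot_right (x' i)).tendsto 0).comp hz0
        rwa [dot_zero_right] at this
      have := h6.sub h7
      rwa [sub_zero] at this
    have hnice : Tendsto (fun m => - c m i₀ - (dot (x' i₀) Xh - dot (x' i) Xh) -
        (dot (x' i₀) (z m) - dot (x' i) (z m))) atTop
        (𝓝 (- cr i₀ - (dot (x' i₀) Xh - dot (x' i) Xh) - 0)) :=
      (((hJconv i₀ hi₀J).neg).sub tendsto_const_nhds).sub hzt
    have := hnice.add_atTop (hIdiv i hi)
    exact this.congr fun m => (hco m).symm
  have hgapall : ∀ᶠ m in atTop, ∀ i ∈ Finset.univ \ J,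
      dot (x' i) (w m) < dot (x' i₀) (w m) := by
    rw [Filter.eventually_all_finset]
    intro i hi
    filter_upwards [(hgap i (Finset.mem_sdiff.mp hi).2).eventually_gt_atTop 0] with m hm
    linarith
  obtain ⟨m₀, hm₀⟩ := hgapall.exists
  -- the exposing functional
  set v : Fin n → ℝ := w m₀ with hv
  set cstar : ℝ := dot (x' i₀) (w m₀) with hcstar
  have hJv : ∀ j ∈ J, dot (x' j) v = cstar := fun j hj => hweq m₀ j i₀ hj hi₀J
  have hoffJ : ∀ i ∉ J, dot (x' i) v < cstar := fun i hi =>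
    hm₀ i (Finset.mem_sdiff.mpr ⟨Finset.mem_univ i, hi⟩)
  have hle : ∀ i, dot (x' i) v ≤ cstar := by
    intro i
    by_cases hiJ : i ∈ J
    · exact (hJv i hiJ).le
    · exact (hoffJ i hiJ).le
  have hNv : N v = cstar := by
    rw [N_eq_sup' hrep]
    apply le_antisymm
    · exact Finset.sup'_le _ _ fun i _ => hle i
    · rw [← hJv i₀ hi₀J]
      exact Finset.le_sup' (fun i => dot (x' i) v) (Finset.mem_univ i₀)
  have hcpos : 0 < cstar := by
    have h8 : dot (x' i₁) v = - cstar := by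
      rw [hi₁, dot_neg_left, hJv i₀ hi₀J]
    have := hoffJ i₁ hi₁J
    rw [h8] at this
    linarith
  have hballle : ∀ y ∈ dualBall N, dot y v ≤ cstar := fun y hy => by
    have := hy v
    rwa [hNv] at this
  set F : Set (Fin n → ℝ) := {y ∈ dualBall N | dot y v = cstar} with hF
  have hface : IsProperFace (dualBall N) F := by
    refine ⟨v, cstar, hballle, ⟨x' i₀, x'_mem_dualBall hpoly i₀, hJv i₀ hi₀J⟩, rfl, ?_⟩
    intro h
    have h0 : (0 : Fin n → ℝ) ∈ F := h.symm ▸ zero_mem_dualBall hN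
    have := h0.2
    rw [dot_zero_left] at this
    linarith
  have hext : x' '' ↑J = Set.extremePoints ℝ F := by
    apply Set.Subset.antisymm
    · rintro p ⟨j, hj, rfl⟩
      have hjJ : j ∈ J := Finset.mem_coe.mp hj
      exact extremePoint_mono (Set.sep_subset _ _) (hpoly ▸ Set.mem_range_self j)
        ⟨x'_mem_dualBall hpoly j, hJv j hjJ⟩
    · intro p hp
      have hpB : p ∈ Set.extremePoints ℝ (dualBall N) := extremePoint_of_face hballle hp
      rw [← hpoly] at hpB
      obtain ⟨i, rfl⟩ := hpB
      have hdot : dot (x' i) v = cstar := hp.1.2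
      have hiJ : i ∈ J := by
        by_contra h
        exact absurd hdot (ne_of_lt (hoffJ i h))
      exact Set.mem_image_of_mem _ (Finset.mem_coe.mpr hiJ)
  -- the formula
  have hsupXh : J.sup' hJ (fun j => dot (x' j) Xh) = dot (x' i₀) Xh := by
    apply le_antisymm
    · apply Finset.sup'_le
      intro j hj
      have h9 := hXhp i₀ j hi₀J hj
      rw [hcr₀] at h9
      have := hcrnn j hj
      linarith
    · exact Finset.le_sup' (fun j => dot (x' j) Xh) hi₀J
  refine ⟨Xh, J, hJ, F, hface, hext, ?_⟩
  funext x
  rw [hfx x, hsupXh, inf'_add_const]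
  apply Finset.inf'_congr (H := hJ) rfl
  intro j hj
  have h10 := hXhp i₀ j hi₀J hj
  rw [hcr₀] at h10
  rw [dot_sub_right]
  linarith

end hardmain
/-- for a polyhedral norm `N = max_i ⟨x′_i, ·⟩`, whose dual ball `B′` has
finite extreme point set `{x′_i}_{i ∈ I}`, the Martin boundary `ℳ ∖ 𝒦` of the kernel
`(x,y) ↦ −N(y−x)` with basepoint `0` consists exactly of the functions
`x ↦ min_{j∈J} ⟨x′_j, x − X⟩ + max_{j∈J} ⟨x′_j, X⟩` where `X ∈ ℝⁿ` and `{x′_j}_{j∈J}` is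
the extreme point set of a proper face of `B′`; moreover every boundary point is a
Busemann point of `(ℝⁿ, N)`. -/
theorem polyhedral_martin_boundary {n : ℕ} (hn : 1 ≤ n)
    {I : Type*} [Fintype I] [Nonempty I]
    (N : (Fin n → ℝ) → ℝ) (hN : IsNorm N) (x' : I → Fin n → ℝ)
    (hrep : ∀ x, N x = ⨆ i, dot (x' i) x)
    (hpoly : Set.range x' = (dualBall N).extremePoints ℝ) :
    (polyMartin N \ polyKset N =
      {f | ∃ (X : Fin n → ℝ) (J : Finset I) (hJ : J.Nonempty)
          (F : Set (Fin n → ℝ)),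
        IsProperFace (dualBall N) F ∧ x' '' ↑J = F.extremePoints ℝ ∧
        f = fun x => J.inf' hJ (fun j => dot (x' j) (x - X)) +
          J.sup' hJ (fun j => dot (x' j) X)}) ∧
    ∀ f ∈ polyMartin N \ polyKset N, IsBusemannPt N f := by
  constructor
  · ext f
    constructor
    · rintro ⟨hfM, hfK⟩
      exact hard_repr hn hN hrep hpoly hfM hfK
    · rintro ⟨X, J, hJ, F, hface, hext, rfl⟩
      exact (easy_dir hN hrep hpoly (hJ := hJ) (X := X) hface hext).1
  · intro f hf
    obtain ⟨X, J, hJ, F, hface, hext, hform⟩ := hard_repr hn hN hrep hpoly hf.1 hf.2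
    rw [hform]
    exact (easy_dir hN hrep hpoly (hJ := hJ) (X := X) hface hext).2

end PolyNorm
end
end
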